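/- arXiv:1007.1760 — 8 statements merged into one kernel-verified Lean document; each statement's English description precedes it below -/
import Mathlib

section
/- Let π be a permutation of {1,…,n} and let M = {π(j) − i : 1 ≤ i < j ≤ n, π(i) > π(j)} (a finite set of integers), with m = |M|. Then there exist m permutations ρ¹, ρ², …, ρᵐ of {1,…,n}, each of bandwidth 1, such that π = ρ¹ ∘ ρ² ∘ ⋯ ∘ ρᵐ. -/
open Finset

namespace StrangAux

variable {n : ℕ}

/-- rank of `v` under key `f` -/
def rk (f : Fin n → ℤ) (v : Fin n) : ℕ := (univ.filter fun w => f w < f v).card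

lemma rk_lt_n (f : Fin n → ℤ) (v : Fin n) : rk f v < n := by
  have hn := v.pos
  have hsub : (univ.filter fun w => f w < f v) ⊆ univ.erase v := by
    intro w hw
    rcases mem_filter.mp hw with ⟨-, hlt⟩
    refine mem_erase.mpr ⟨?_, mem_univ _⟩
    rintro rfl; exact lt_irrefl _ hlt
  have h := card_le_card hsub
  rw [card_erase_of_mem (mem_univ v), card_univ, Fintype.card_fin] at h
  unfold rk
  omega

lemma rk_strict (f : Fin n → ℤ) {v w : Fin n} (h : f v < f w) : rk f v < rk f w := by
  apply Finset.card_lt_card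
  rw [Finset.ssubset_iff_of_subset]
  · refine ⟨v, ?_, ?_⟩
    · exact mem_filter.mpr ⟨mem_univ _, h⟩
    · intro hv
      exact lt_irrefl _ (mem_filter.mp hv).2
  · intro x hx
    exact mem_filter.mpr ⟨mem_univ _, lt_trans (mem_filter.mp hx).2 h⟩

/-- the rank permutation of an injective key -/
noncomputable def rkPerm (f : Fin n → ℤ) (hf : Function.Injective f) : Equiv.Perm (Fin n) :=
  Equiv.ofBijective (fun v => (⟨rk f v, rk_lt_n f v⟩ : Fin n))
    (Finite.injective_iff_bijective.mp (by
      intro v w h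
      by_contra hne
      have hfne : f v ≠ f w := fun hh => hne (hf hh)
      have h' : rk f v = rk f w := by
        have := congrArg Fin.val h
        simpa using this
      rcases lt_or_gt_of_ne hfne with hlt | hlt
      · have := rk_strict f hlt; omega
      · have := rk_strict f hlt; omega))

lemma rkPerm_apply (f : Fin n → ℤ) (hf : Function.Injective f) (v : Fin n) :
    ((rkPerm f hf v : Fin n) : ℕ) = rk f v := rfl

lemma rk_eq_perm (f : Fin n → ℤ) (e : Equiv.Perm (Fin n))
    (h : ∀ v w : Fin n, f w < f v ↔ e w < e v) (v : Fin n) : rk f v = (e v : ℕ) := by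
  unfold rk
  rw [show (univ.filter fun w => f w < f v) = univ.filter fun w => e w < e v from
    filter_congr (by intro w _; exact h v w)]
  have h2 : (univ.filter fun w => e w < e v).card = (univ.filter fun u => u < e v).card := by
    apply Finset.card_bij (fun w _ => e w)
    · intro a ha; simp only [mem_filter, mem_univ, true_and] at ha ⊢; exact ha
    · intro a _ b _ hab; exact e.injective hab
    · intro b hb
      refine ⟨e.symm b, ?_, by simp⟩
      simp only [mem_filter, mem_univ, true_and] at hb ⊢
      simpa using hb
  rw [h2, show (univ.filter fun u => u < e v) = Finset.Iio (e v) by ext u; simp]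
  exact Fin.card_Iio _

lemma tele {G : Type*} [Group G] (f : ℕ → G) : ∀ k : ℕ,
    (List.ofFn (fun j : Fin k => f (k - (j : ℕ)) * (f (k - (j : ℕ) - 1))⁻¹)).prod
      = f k * (f 0)⁻¹ := by
  intro k
  induction k with
  | zero => simp
  | succ k ih =>
    rw [List.ofFn_succ, List.prod_cons]
    have hfun : (fun j : Fin k =>
        f (k + 1 - ((j.succ : Fin (k+1)) : ℕ)) * (f (k + 1 - ((j.succ : Fin (k+1)) : ℕ) - 1))⁻¹)
        = fun j : Fin k => f (k - (j : ℕ)) * (f (k - (j : ℕ) - 1))⁻¹ := by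
      funext j
      have h1 : ((j.succ : Fin (k+1)) : ℕ) = (j : ℕ) + 1 := rfl
      rw [h1]
      have h2 : k + 1 - ((j : ℕ) + 1) = k - (j : ℕ) := by omega
      rw [h2]
    rw [hfun, ih]
    have h0 : ((0 : Fin (k+1)) : ℕ) = 0 := rfl
    rw [h0]
    simp only [Nat.sub_zero, Nat.add_sub_cancel]
    rw [mul_assoc, inv_mul_cancel_left]

variable (π : Equiv.Perm (Fin n))

/-- position (as an integer) of the value `v` -/
def pZ (v : Fin n) : ℤ := ((π.symm v : ℕ) : ℤ)

lemma pZ_inj : Function.Injective (pZ π) := by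
  intro a b h
  apply π.symm.injective
  have h' : ((π.symm a : ℕ) : ℤ) = ((π.symm b : ℕ) : ℤ) := h
  exact Fin.ext (by exact_mod_cast h')

/-- threshold sequence: `Gf M hne 0 = min M - 1`, `Gf M hne t` = `t`-th smallest element of `M`. -/
noncomputable def Gf (M : Finset ℤ) (hne : M.Nonempty) : ℕ → ℤ := fun t =>
  if t = 0 then M.min' hne - 1
  else if h2 : t - 1 < M.card then M.orderEmbOfFin rfl ⟨t - 1, h2⟩ else M.max' hne

lemma Gf_zero (M : Finset ℤ) (hne : M.Nonempty) : Gf M hne 0 = M.min' hne - 1 := by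
  simp [Gf]

lemma Gf_succ (M : Finset ℤ) (hne : M.Nonempty) {t : ℕ} (h : t < M.card) :
    Gf M hne (t + 1) = M.orderEmbOfFin rfl ⟨t, h⟩ := by
  simp only [Gf, if_neg (Nat.succ_ne_zero t)]
  rw [dif_pos (show t + 1 - 1 < M.card by omega)]
  congr 1

lemma Gf_zero_lt (M : Finset ℤ) (hne : M.Nonempty) {z : ℤ} (hz : z ∈ M) :
    Gf M hne 0 < z := by
  have := M.min'_le z hz
  rw [Gf_zero]
  omega

lemma Gf_range (M : Finset ℤ) (hne : M.Nonempty) {z : ℤ} (hz : z ∈ M) :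
    ∃ s : Fin M.card, M.orderEmbOfFin rfl s = z := by
  have : z ∈ Set.range (M.orderEmbOfFin rfl) := by
    rw [Finset.range_orderEmbOfFin]; exact_mod_cast hz
  exact this

lemma le_Gf_card (M : Finset ℤ) (hne : M.Nonempty) {z : ℤ} (hz : z ∈ M) :
    z ≤ Gf M hne M.card := by
  have hm : 0 < M.card := Finset.card_pos.mpr hne
  obtain ⟨s, hs⟩ := Gf_range M hne hz
  rw [show M.card = (M.card - 1) + 1 by omega, Gf_succ M hne (by omega)]
  rw [← hs]
  apply (M.orderEmbOfFin rfl).le_iff_le.mpr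
  rw [Fin.le_def]
  have := s.2
  show (s : ℕ) ≤ M.card - 1
  omega

lemma Gf_mono (M : Finset ℤ) (hne : M.Nonempty) {t : ℕ} (ht : t + 1 ≤ M.card) :
    Gf M hne t ≤ Gf M hne (t + 1) := by
  rw [Gf_succ M hne (show t < M.card by omega)]
  have hmem : M.orderEmbOfFin rfl ⟨t, by omega⟩ ∈ M := Finset.orderEmbOfFin_mem M rfl _
  rcases Nat.eq_zero_or_pos t with rfl | htpos
  · have := M.min'_le _ hmem
    rw [Gf_zero]
    omega
  · have e1 := Gf_succ M hne (show t - 1 < M.card by omega)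
    rw [show t - 1 + 1 = t by omega] at e1
    rw [e1]
    apply (M.orderEmbOfFin rfl).le_iff_le.mpr
    rw [Fin.le_def]
    show t - 1 ≤ t
    omega

lemma Gf_step (M : Finset ℤ) (hne : M.Nonempty) {z : ℤ} (hz : z ∈ M) {t : ℕ}
    (ht : t + 1 ≤ M.card) (h1 : Gf M hne t < z) (h2 : z ≤ Gf M hne (t + 1)) :
    z = Gf M hne (t + 1) := by
  obtain ⟨s, hs⟩ := Gf_range M hne hz
  rw [Gf_succ M hne (show t < M.card by omega)] at h2 ⊢
  rw [← hs] at h2 ⊢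
  have hst : (s : ℕ) ≤ t := by
    have := (M.orderEmbOfFin rfl).le_iff_le.mp h2
    rw [Fin.le_def] at this
    exact this
  rcases Nat.eq_zero_or_pos t with rfl | htpos
  · congr 1
    exact Fin.ext (show (s : ℕ) = 0 by omega)
  · have e1 := Gf_succ M hne (show t - 1 < M.card by omega)
    rw [show t - 1 + 1 = t by omega] at e1
    rw [e1, ← hs] at h1
    have hgt := (M.orderEmbOfFin rfl).lt_iff_lt.mp h1
    rw [Fin.lt_def] at hgt
    have hgt' : t - 1 < (s : ℕ) := hgt
    congr 1
    exact Fin.ext (show (s : ℕ) = t by omega)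

/-- the key of value `v` at time `t` -/
noncomputable def key (M : Finset ℤ) (hne : M.Nonempty) (t : ℕ) (v : Fin n) : ℤ :=
  min (2 * pZ π v) (2 * ((v : ℕ) : ℤ) - 2 * Gf M hne t - 1)

lemma key_inj (M : Finset ℤ) (hne : M.Nonempty) (t : ℕ) :
    Function.Injective (key π M hne t) := by
  intro a b h
  unfold key at h
  rcases min_cases (2 * pZ π a) (2 * ((a : ℕ) : ℤ) - 2 * Gf M hne t - 1) with ⟨ha, ha'⟩ | ⟨ha, ha'⟩ <;>
    rcases min_cases (2 * pZ π b) (2 * ((b : ℕ) : ℤ) - 2 * Gf M hne t - 1) with ⟨hb, hb'⟩ | ⟨hb, hb'⟩ <;>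
    rw [ha, hb] at h
  · exact pZ_inj π (by omega)
  · omega
  · omega
  · exact Fin.ext (by omega)

lemma key_lt_iff (M : Finset ℤ) (hne : M.Nonempty) (t : ℕ) {u w : Fin n} (hwu : w < u) :
    key π M hne t u < key π M hne t w ↔
      (pZ π u < pZ π w ∧ Gf M hne t < ((w : ℕ) : ℤ) - pZ π u) := by
  have hc : ((w : ℕ) : ℤ) < ((u : ℕ) : ℤ) := by exact_mod_cast hwu
  unfold key
  simp only [lt_min_iff, min_lt_iff]
  omega

end StrangAux

open StrangAux in
/-- A permutation `π` of `{1,…,n}` (modeled as `Equiv.Perm (Fin n)`)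
is a product of `m = |M|` permutations of bandwidth 1, where
`M = {π(j) − i : i < j, π(i) > π(j)}`. -/
theorem strang_factorization_card_M (n : ℕ) (π : Equiv.Perm (Fin n)) (M : Finset ℤ)
    (hM : M = Finset.image (fun p : Fin n × Fin n => ((π p.2 : ℕ) : ℤ) - ((p.1 : ℕ) : ℤ))
      (Finset.univ.filter fun p : Fin n × Fin n => p.1 < p.2 ∧ π p.2 < π p.1)) :
    ∃ ρ : Fin M.card → Equiv.Perm (Fin n),
      (∀ j, ∀ i : Fin n, |(((ρ j) i : ℕ) : ℤ) - ((i : ℕ) : ℤ)| ≤ 1) ∧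
      π = (List.ofFn ρ).prod := by
  classical
  -- membership bridge
  have hmem : ∀ u w : Fin n, w < u → pZ π u < pZ π w → ((w : ℕ) : ℤ) - pZ π u ∈ M := by
    intro u w hwu hp
    rw [hM]
    apply Finset.mem_image.mpr
    refine ⟨(π.symm u, π.symm w), ?_, ?_⟩
    · rw [Finset.mem_filter]
      refine ⟨Finset.mem_univ _, ?_, ?_⟩
      · show π.symm u < π.symm w
        rw [Fin.lt_def]
        have hp' : ((π.symm u : ℕ) : ℤ) < ((π.symm w : ℕ) : ℤ) := hp
        exact_mod_cast hp'
      · show π (π.symm w) < π (π.symm u)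
        simp only [Equiv.apply_symm_apply]
        exact hwu
    · simp only [Equiv.apply_symm_apply, pZ]
  by_cases hne : M.Nonempty
  swap
  · -- M empty : π = 1, take all factors to be the identity
    have hM0 : M = ∅ := Finset.not_nonempty_iff_eq_empty.mp hne
    have hpi : π = 1 := by
      by_contra hpi
      have hex : ∃ i, π i ≠ i := by
        by_contra hall
        push_neg at hall
        exact hpi (Equiv.ext hall)
      set S : Finset (Fin n) := Finset.univ.filter (fun i : Fin n => π i ≠ i) with hS
      have hSne : S.Nonempty := by
        obtain ⟨i, hi⟩ := hex
        exact ⟨i, Finset.mem_filter.mpr ⟨Finset.mem_univ _, hi⟩⟩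
      set i0 := S.min' hSne with hi0def
      have hi0 : π i0 ≠ i0 := (Finset.mem_filter.mp (S.min'_mem hSne)).2
      have hfix : ∀ k : Fin n, k < i0 → π k = k := by
        intro k hk
        by_contra hkne
        exact absurd (S.min'_le k (Finset.mem_filter.mpr ⟨Finset.mem_univ _, hkne⟩))
          (not_le.mpr hk)
      have h1 : i0 < π i0 := by
        rcases lt_trichotomy (π i0) i0 with h | h | h
        · have hfx : π (π i0) = π i0 := hfix (π i0) h
        -- π (π i0) = π i0 ⇒ π i0 = i0
          exact absurd (π.injective hfx) hi0
        · exact absurd h hi0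
        · exact h
      have h2 : i0 < π.symm i0 := by
        rcases lt_trichotomy (π.symm i0) i0 with h | h | h
        · have hfx : π (π.symm i0) = π.symm i0 := hfix (π.symm i0) h
          rw [Equiv.apply_symm_apply] at hfx
          rw [← hfx] at h
          exact absurd h (lt_irrefl _)
        · have : π i0 = i0 := by
            conv_lhs => rw [← h]
            exact π.apply_symm_apply i0
          exact absurd this hi0
        · exact h
      -- inversion (i0, π.symm i0) contributes to M, contradiction
      have hz : ((π (π.symm i0) : ℕ) : ℤ) - ((i0 : ℕ) : ℤ) ∈ M := by
        rw [hM]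
        apply Finset.mem_image.mpr
        refine ⟨(i0, π.symm i0), ?_, rfl⟩
        rw [Finset.mem_filter]
        refine ⟨Finset.mem_univ _, h2, ?_⟩
        rw [Equiv.apply_symm_apply]
        exact h1
      rw [hM0] at hz
      exact absurd hz (Finset.notMem_empty _)
    refine ⟨fun _ => 1, ?_, ?_⟩
    · intro j i
      simp
    · rw [hpi]
      symm
      apply List.prod_eq_one
      intro x hx
      obtain ⟨j, rfl⟩ := List.mem_ofFn.mp hx
      rfl
  · -- main case
    set m := M.card with hmdef
    have hm : 0 < m := Finset.card_pos.mpr hne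
    set R : ℕ → Equiv.Perm (Fin n) :=
      fun t => rkPerm (key π M hne t) (key_inj π M hne t) with hRdef
    -- R 0 = π⁻¹
    have hplt : ∀ a b : Fin n, π.symm a < π.symm b ↔ pZ π a < pZ π b := by
      intro a b
      rw [Fin.lt_def]
      unfold pZ
      constructor <;> intro h <;> exact_mod_cast h
    have hR0 : R 0 = π⁻¹ := by
      apply Equiv.ext
      intro v
      apply Fin.ext
      show rk (key π M hne 0) v = ((π⁻¹ v : Fin n) : ℕ)
      apply rk_eq_perm (key π M hne 0) π⁻¹
      intro v' w'
      show key π M hne 0 w' < key π M hne 0 v' ↔ π.symm w' < π.symm v'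
      rcases lt_trichotomy w' v' with hlt | rfl | hlt
      · -- w' < v'
        rw [hplt]
        constructor
        · intro h
          rcases lt_trichotomy (pZ π w') (pZ π v') with hp | hp | hp
          · exact hp
          · exact absurd (pZ_inj π hp) (by rintro rfl; exact lt_irrefl _ hlt)
          · -- pZ v' < pZ w' : inversion (v', w'), so key v' < key w'
            have hzM := hmem v' w' hlt hp
            have := (key_lt_iff π M hne 0 hlt).mpr ⟨hp, Gf_zero_lt M hne hzM⟩
            omega
        · intro hp
          have hne' : key π M hne 0 w' ≠ key π M hne 0 v' := by
            intro hh
            have := key_inj π M hne 0 hh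
            subst this
            exact lt_irrefl _ hp
          rcases hne'.lt_or_gt with h | h
          · exact h
          · rw [key_lt_iff π M hne 0 hlt] at h
            omega
      · simp
      · -- v' < w'
        rw [hplt]
        rw [key_lt_iff π M hne 0 hlt]
        constructor
        · intro ⟨h, _⟩; exact h
        · intro hp
          refine ⟨hp, ?_⟩
          exact Gf_zero_lt M hne (hmem w' v' hlt hp)
    have hRm : R m = 1 := by
      apply Equiv.ext
      intro v
      apply Fin.ext
      show rk (key π M hne m) v = (((1 : Equiv.Perm (Fin n)) v : Fin n) : ℕ)
      apply rk_eq_perm (key π M hne m) 1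
      intro v' w'
      show key π M hne m w' < key π M hne m v' ↔ w' < v'
      rcases lt_trichotomy w' v' with hlt | rfl | hlt
      · simp only [hlt, iff_true]
        have hkey : ¬ key π M hne m v' < key π M hne m w' := by
          rw [key_lt_iff π M hne m hlt]
          rintro ⟨hp, hg⟩
          have hzM := hmem v' w' hlt hp
          have hle := le_Gf_card M hne hzM
          rw [← hmdef] at hle
          omega
        have hne' : key π M hne m w' ≠ key π M hne m v' := by
          intro hh
          have := key_inj π M hne m hh
          subst this
          exact lt_irrefl _ hlt
        rcases hne'.lt_or_gt with h | h
        · exact h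
        · exact absurd h hkey
      · simp
      · simp only [not_lt.mpr (le_of_lt hlt), iff_false]
        rw [key_lt_iff π M hne m hlt]
        rintro ⟨hp, hg⟩
        have hzM := hmem w' v' hlt hp
        have hle := le_Gf_card M hne hzM
        rw [← hmdef] at hle
        omega
    -- the one-step bound
    have hstep : ∀ t : ℕ, t + 1 ≤ m → ∀ v : Fin n,
        rk (key π M hne (t+1)) v ≤ rk (key π M hne t) v + 1 ∧
        rk (key π M hne t) v ≤ rk (key π M hne (t+1)) v + 1 := by
      intro t ht v
      set A : Finset (Fin n) := univ.filter (fun w => key π M hne t w < key π M hne t v) with hA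
      set B : Finset (Fin n) :=
        univ.filter (fun w => key π M hne (t+1) w < key π M hne (t+1) v) with hB
      have hGmono := Gf_mono M hne ht
      have hBA : (B \ A).card ≤ 1 := by
        apply Finset.card_le_one.mpr
        have hval : ∀ z ∈ B \ A, ((z : ℕ) : ℤ) = Gf M hne (t+1) + pZ π v := by
          intro z hz
          rcases Finset.mem_sdiff.mp hz with ⟨hzB, hzA⟩
          have hz1 : key π M hne (t+1) z < key π M hne (t+1) v := (Finset.mem_filter.mp hzB).2
          have hz2 : ¬ key π M hne t z < key π M hne t v := fun h =>
            hzA (Finset.mem_filter.mpr ⟨Finset.mem_univ _, h⟩)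
          have hzv : z ≠ v := by rintro rfl; exact lt_irrefl _ hz1
          rcases lt_trichotomy z v with hlt | heq | hlt
          · -- z < v
            have hkne : key π M hne t z ≠ key π M hne t v := by
              intro hh; exact hzv (key_inj π M hne t hh)
            have hvz : key π M hne t v < key π M hne t z := by
              rcases hkne.lt_or_gt with h | h
              · exact absurd h hz2
              · exact h
            rw [key_lt_iff π M hne t hlt] at hvz
            have hnot : ¬ (pZ π v < pZ π z ∧ Gf M hne (t+1) < ((z : ℕ) : ℤ) - pZ π v) := by
              rw [← key_lt_iff π M hne (t+1) hlt]
              exact asymm hz1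
            have hle : ((z : ℕ) : ℤ) - pZ π v ≤ Gf M hne (t+1) := by
              by_contra hcon
              exact hnot ⟨hvz.1, by omega⟩
            have hzM := hmem v z hlt hvz.1
            have := Gf_step M hne hzM ht hvz.2 hle
            omega
          · exact absurd heq hzv
          · -- v < z : impossible
            exfalso
            rw [key_lt_iff π M hne (t+1) hlt] at hz1
            rw [key_lt_iff π M hne t hlt] at hz2
            exact hz2 ⟨hz1.1, by omega⟩
        intro x hx y hy
        have h1 := hval x hx
        have h2 := hval y hy
        exact Fin.ext (by omega)
      have hAB : (A \ B).card ≤ 1 := by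
        apply Finset.card_le_one.mpr
        have hval : ∀ z ∈ A \ B, pZ π z = ((v : ℕ) : ℤ) - Gf M hne (t+1) := by
          intro z hz
          rcases Finset.mem_sdiff.mp hz with ⟨hzA, hzB⟩
          have hz1 : key π M hne t z < key π M hne t v := (Finset.mem_filter.mp hzA).2
          have hz2 : ¬ key π M hne (t+1) z < key π M hne (t+1) v := fun h =>
            hzB (Finset.mem_filter.mpr ⟨Finset.mem_univ _, h⟩)
          have hzv : z ≠ v := by rintro rfl; exact lt_irrefl _ hz1
          rcases lt_trichotomy z v with hlt | heq | hlt
          · -- z < v : impossible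
            exfalso
            have hkne : key π M hne (t+1) z ≠ key π M hne (t+1) v := by
              intro hh; exact hzv (key_inj π M hne (t+1) hh)
            have hvz : key π M hne (t+1) v < key π M hne (t+1) z := by
              rcases hkne.lt_or_gt with h | h
              · exact absurd h hz2
              · exact h
            rw [key_lt_iff π M hne (t+1) hlt] at hvz
            have hnot : ¬ (pZ π v < pZ π z ∧ Gf M hne t < ((z : ℕ) : ℤ) - pZ π v) := by
              rw [← key_lt_iff π M hne t hlt]
              exact asymm hz1
            exact hnot ⟨hvz.1, by omega⟩
          · exact absurd heq hzv
          · -- v < z : main case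
            rw [key_lt_iff π M hne t hlt] at hz1
            have hnot : ¬ (pZ π z < pZ π v ∧ Gf M hne (t+1) < ((v : ℕ) : ℤ) - pZ π z) := by
              rw [← key_lt_iff π M hne (t+1) hlt]
              exact hz2
            have hle : ((v : ℕ) : ℤ) - pZ π z ≤ Gf M hne (t+1) := by
              by_contra hcon
              exact hnot ⟨hz1.1, by omega⟩
            have hzM := hmem z v hlt hz1.1
            have := Gf_step M hne hzM ht hz1.2 hle
            omega
        intro x hx y hy
        have h1 := hval x hx
        have h2 := hval y hy
        exact pZ_inj π (by omega)
      have hBcard : B.card ≤ A.card + 1 := by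
        have e1 : (B ∩ A).card + (B \ A).card = B.card := Finset.card_inter_add_card_sdiff B A
        have e2 : (B ∩ A).card ≤ A.card := Finset.card_le_card (Finset.inter_subset_right)
        omega
      have hAcard : A.card ≤ B.card + 1 := by
        have e1 : (A ∩ B).card + (A \ B).card = A.card := Finset.card_inter_add_card_sdiff A B
        have e2 : (A ∩ B).card ≤ B.card := Finset.card_le_card (Finset.inter_subset_right)
        omega
      constructor
      · show B.card ≤ A.card + 1
        exact hBcard
      · show A.card ≤ B.card + 1
        exact hAcard
    -- assemble
    refine ⟨fun j => R (m - (j : ℕ)) * (R (m - (j : ℕ) - 1))⁻¹, ?_, ?_⟩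
    · intro j i
      have hj : (j : ℕ) < m := j.2
      show |(((R (m - (j : ℕ)) * (R (m - (j : ℕ) - 1))⁻¹) i : ℕ) : ℤ) - ((i : ℕ) : ℤ)| ≤ 1
      set s := m - (j : ℕ) - 1 with hs
      have h1 : m - (j : ℕ) = s + 1 := by omega
      rw [h1]
      have hsm : s + 1 ≤ m := by omega
      set v : Fin n := (R s)⁻¹ i with hv
      have hi : R s v = i := by
        rw [hv]; exact Equiv.apply_symm_apply _ _
      have happ : (R (s+1) * (R s)⁻¹) i = R (s+1) v := rfl
      rw [happ, ← hi]
      have hb := hstep s hsm v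
      have hval1 : ((R (s+1) v : Fin n) : ℕ) = rk (key π M hne (s+1)) v := rfl
      have hval2 : ((R s v : Fin n) : ℕ) = rk (key π M hne s) v := rfl
      rw [abs_le]
      constructor
      · rw [hval1, hval2] at *
        push_cast
        omega
      · rw [hval1, hval2] at *
        push_cast
        omega
    · rw [tele R m, hRm, hR0]
      simp
end

section
/- Fix w ≥ 1 and n ≥ 2w, and let σ be the permutation of {1,…,n} defined by σ(i) = i + w for 1 ≤ i ≤ w, σ(i) = i − w for w+1 ≤ i ≤ 2w, and σ(i) = i for i > 2w. Then σ has bandwidth w, and whenever σ is written as a product of k permutations of bandwidth 1, necessarily k ≥ 2w − 1. -/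
/-- A step function that moves by at most 1 and goes from above `c` (at time 0)
to at most `c` (at time `k`) must have a step going from `c+1` down to `c`. -/
lemma cross_exists_aux (c : ℕ) : ∀ (k : ℕ) (f : ℕ → ℕ),
    (∀ t, t < k → (f t ≤ f (t+1) + 1 ∧ f (t+1) ≤ f t + 1)) →
    f k ≤ c → c < f 0 → ∃ t, t < k ∧ f t = c + 1 ∧ f (t+1) = c := by
  intro k
  induction k with
  | zero => intro f _ h1 h2; omega
  | succ m ih =>
    intro f hf h1 h2
    by_cases hm : f m ≤ c
    · obtain ⟨t, ht, h⟩ := ih f (fun t ht => hf t (by omega)) hm h2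
      exact ⟨t, by omega, h⟩
    · refine ⟨m, by omega, ?_, ?_⟩ <;> have := hf m (by omega) <;> omega

/-- A bandwidth-1 permutation sending `c` to `c+1` must send `c+1` back to `c`. -/
lemma bw1_inv {n : ℕ} (ρ : Equiv.Perm (Fin n))
    (h : ∀ x : Fin n, ((ρ x : Fin n) : ℕ) ≤ (x : ℕ) + 1 ∧ (x : ℕ) ≤ ((ρ x : Fin n) : ℕ) + 1) :
    ∀ c : ℕ, ∀ (hc : c < n) (hc1 : c + 1 < n),
      ρ ⟨c, hc⟩ = ⟨c + 1, hc1⟩ → ρ ⟨c + 1, hc1⟩ = ⟨c, hc⟩ := by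
  intro c
  induction c using Nat.strong_induction_on with
  | _ c ih =>
    intro hc hc1 hrc
    obtain ⟨y, hρy⟩ : ∃ y, ρ y = ⟨c, hc⟩ := ⟨ρ.symm _, Equiv.apply_symm_apply ρ _⟩
    have hb : c ≤ (y : ℕ) + 1 ∧ (y : ℕ) ≤ c + 1 := by
      have hb0 := h y
      rw [hρy] at hb0
      exact hb0
    have hyc : (y : ℕ) ≠ c := by
      intro hEq
      have hyy : y = ⟨c, hc⟩ := Fin.ext hEq
      rw [hyy, hrc] at hρy
      have h9 : c + 1 = c := congrArg Fin.val hρy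
      omega
    have hyn : (y : ℕ) < n := y.2
    rcases Nat.lt_or_ge (y : ℕ) c with hlt | hge
    · obtain ⟨d, rfl⟩ : ∃ d, c = d + 1 := ⟨c - 1, by omega⟩
      have hyy : y = ⟨d, by omega⟩ := Fin.ext (show (y : ℕ) = d by omega)
      rw [hyy] at hρy
      have hih := ih d (by omega) (by omega) hc hρy
      rw [hrc] at hih
      have h9 : d + 1 + 1 = d := congrArg Fin.val hih
      omega
    · have hyy : y = ⟨c + 1, hc1⟩ := Fin.ext (show (y : ℕ) = c + 1 by omega)
      rw [hyy] at hρy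
      exact hρy

/-- for `w ≥ 1`, `n ≥ 2w`, the permutation `σ` sending
`i ↦ i + w` for the first `w` values, `i ↦ i − w` for the next `w` values,
and fixing everything else, has bandwidth `w` and cannot be written as a
product of fewer than `2w − 1` permutations of bandwidth 1.
(Indices are 0-based: `Fin n` models `{1,…,n}`.) -/
theorem extreme_permutation_lower_bound (n w : ℕ) (hw : 1 ≤ w) (hn : 2 * w ≤ n)
    (σ : Equiv.Perm (Fin n))
    (hσ : ∀ i : Fin n, ((σ i : ℕ) : ℤ) =
      if (i : ℕ) < w then ((i : ℕ) : ℤ) + w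
      else if (i : ℕ) < 2 * w then ((i : ℕ) : ℤ) - w
      else ((i : ℕ) : ℤ)) :
    (∀ i : Fin n, |((σ i : ℕ) : ℤ) - ((i : ℕ) : ℤ)| ≤ (w : ℤ)) ∧
    ∀ (k : ℕ) (ρ : Fin k → Equiv.Perm (Fin n)),
      (∀ j, ∀ i : Fin n, |(((ρ j) i : ℕ) : ℤ) - ((i : ℕ) : ℤ)| ≤ 1) →
      σ = (List.ofFn ρ).prod → 2 * w - 1 ≤ k := by
  have hwn : w < n := by omega
  constructor
  · intro i
    rw [hσ i]
    split_ifs with h1 h2 <;> rw [abs_le] <;> constructor <;> omega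
  · intro k ρ hρ hprod
    have hρ' : ∀ (j : Fin k) (x : Fin n),
        ((ρ j x : Fin n) : ℕ) ≤ (x : ℕ) + 1 ∧ (x : ℕ) ≤ ((ρ j x : Fin n) : ℕ) + 1 := by
      intro j x
      have := abs_le.mp (hρ j x)
      omega
    set Q : ℕ → Equiv.Perm (Fin n) := fun t => ((List.ofFn ρ).drop t).prod with hQdef
    have hQ0 : Q 0 = σ := by simpa [hQdef] using hprod.symm
    have hQk : Q k = 1 := by
      simp only [hQdef]
      rw [List.drop_of_length_le (by simp), List.prod_nil]
    have hQstep : ∀ (t : ℕ) (ht : t < k), Q t = ρ ⟨t, ht⟩ * Q (t + 1) := by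
      intro t ht
      have hlen : t < (List.ofFn ρ).length := by simpa using ht
      simp only [hQdef]
      rw [List.drop_eq_getElem_cons hlen, List.prod_cons, List.getElem_ofFn]
    have hstepQ : ∀ (i : Fin n) (t : ℕ), t < k →
        ((Q t i : Fin n) : ℕ) ≤ ((Q (t+1) i : Fin n) : ℕ) + 1 ∧
        ((Q (t+1) i : Fin n) : ℕ) ≤ ((Q t i : Fin n) : ℕ) + 1 := by
      intro i t ht
      rw [hQstep t ht, Equiv.Perm.mul_apply]
      exact hρ' _ _
    -- key: for each point crossing cut c upward, some step swaps c and c+1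
    have key : ∀ (c : ℕ) (hc : c < n) (hc1 : c + 1 < n) (i : Fin n),
        (i : ℕ) ≤ c → c < ((σ i : Fin n) : ℕ) →
        ∃ t : Fin k, ρ t ⟨c, hc⟩ = ⟨c + 1, hc1⟩ ∧ Q ((t : ℕ) + 1) i = ⟨c, hc⟩ := by
      intro c hc hc1 i hi hσi
      obtain ⟨t, htk, h1, h2⟩ := cross_exists_aux c k (fun t => ((Q t i : Fin n) : ℕ))
        (fun t ht => hstepQ i t ht)
        (by simpa [hQk] using hi) (by simpa [hQ0] using hσi)
      have e2 : Q (t + 1) i = ⟨c, hc⟩ := Fin.ext h2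
      refine ⟨⟨t, htk⟩, ?_, e2⟩
      have hQt : Q t i = ρ ⟨t, htk⟩ (Q (t + 1) i) := by
        rw [hQstep t htk, Equiv.Perm.mul_apply]
      rw [e2] at hQt
      exact Fin.ext (by rw [← hQt]; exact h1)
    -- counting: cut c is served by at least m distinct steps
    have count : ∀ (c m : ℕ) (hc : c < n) (hc1 : c + 1 < n), m ≤ w → c < w →
        (∀ a, a < m → a ≤ c) →
        m ≤ (Finset.univ.filter (fun t : Fin k => ρ t ⟨c, hc⟩ = ⟨c + 1, hc1⟩)).card := by
      intro c m hc hc1 hmw hcw ham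
      have hσval : ∀ (i : Fin n), (i : ℕ) < w → ((σ i : Fin n) : ℕ) = (i : ℕ) + w := by
        intro i hi
        have h5 := hσ i
        rw [if_pos hi] at h5
        omega
      have hex : ∀ a : Fin m, ∃ t : Fin k,
          ρ t ⟨c, hc⟩ = ⟨c + 1, hc1⟩ ∧ Q ((t : ℕ) + 1) ⟨(a : ℕ), by omega⟩ = ⟨c, hc⟩ := by
        intro a
        refine key c hc hc1 ⟨(a : ℕ), by omega⟩ (show ((a : ℕ)) ≤ c from ham a a.2) ?_
        have h6 := hσval ⟨(a : ℕ), by omega⟩ (show ((a : ℕ)) < w from by omega)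
        rw [h6]
        show c < (a : ℕ) + w
        omega
      classical
      choose F hF1 hF2 using hex
      have : (Finset.univ : Finset (Fin m)).card ≤
          (Finset.univ.filter (fun t : Fin k => ρ t ⟨c, hc⟩ = ⟨c + 1, hc1⟩)).card :=
        Finset.card_le_card_of_injOn F
        (fun a _ => by simp only [Finset.mem_coe, Finset.mem_filter, Finset.mem_univ, true_and]; exact hF1 a)
        (by
          intro a _ b _ hab
          have : Q ((F a : ℕ) + 1) ⟨(a : ℕ), by omega⟩ = Q ((F a : ℕ) + 1) ⟨(b : ℕ), by omega⟩ := by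
            rw [hF2 a, hab, hF2 b]
          have := (Q ((F a : ℕ) + 1)).injective this
          have := congrArg Fin.val this
          exact Fin.ext (by simpa using this))
      simpa using this
    by_cases hw1 : w = 1
    · subst hw1
      have A := count 0 1 (by omega) (by omega) le_rfl (by omega) (by omega)
      have B : (Finset.univ.filter
          (fun t : Fin k => ρ t ⟨0, by omega⟩ = ⟨0 + 1, by omega⟩)).card ≤ k := by
        calc _ ≤ (Finset.univ : Finset (Fin k)).card := Finset.card_filter_le _ _
        _ = k := by simp
      omega
    · obtain ⟨c, rfl⟩ : ∃ c, w = c + 2 := ⟨w - 2, by omega⟩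
      have hc1n : c + 1 < n := by omega
      have hc2n : c + 1 + 1 < n := by omega
      have hcn : c < n := by omega
      have A := count (c + 1) (c + 2) hc1n hc2n le_rfl (by omega) (by omega)
      have B := count c (c + 1) hcn hc1n (by omega) (by omega) (by omega)
      set U1 : Finset (Fin k) :=
        Finset.univ.filter (fun t : Fin k => ρ t ⟨c + 1, hc1n⟩ = ⟨c + 1 + 1, hc2n⟩) with hU1
      set U2 : Finset (Fin k) :=
        Finset.univ.filter (fun t : Fin k => ρ t ⟨c, hcn⟩ = ⟨c + 1, hc1n⟩) with hU2
      have hdis : Disjoint U1 U2 := by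
        rw [Finset.disjoint_left]
        intro t ht1 ht2
        simp only [hU1, Finset.mem_filter, Finset.mem_univ, true_and] at ht1
        simp only [hU2, Finset.mem_filter, Finset.mem_univ, true_and] at ht2
        have hcon := bw1_inv (ρ t) (hρ' t) c hcn hc1n ht2
        rw [ht1] at hcon
        have h9 : c + 1 + 1 = c := congrArg Fin.val hcon
        omega
      have hunion : (U1 ∪ U2).card = U1.card + U2.card := Finset.card_union_of_disjoint hdis
      have hle : (U1 ∪ U2).card ≤ k := by
        calc (U1 ∪ U2).card ≤ (Finset.univ : Finset (Fin k)).card := Finset.card_le_univ _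
        _ = k := by simp
      omega
end

section
/- For every w ≥ 1 there exist an n and a permutation π of {1,…,n} of bandwidth w such that π cannot be written as a product of fewer than 2w − 1 permutations of bandwidth 1; that is, the bound 2w − 1 in Strang's conjecture is exact. -/
namespace StrangExact

/-- Bandwidth-1 condition on a permutation of `Fin n`. -/
def band1 {n : ℕ} (τ : Equiv.Perm (Fin n)) : Prop :=
  ∀ i : Fin n, |((τ i : ℕ) : ℤ) - ((i : ℕ) : ℤ)| ≤ 1

lemma band1_le {n : ℕ} {τ : Equiv.Perm (Fin n)} (h : band1 τ) (i : Fin n) :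
    (τ i : ℕ) ≤ (i : ℕ) + 1 ∧ (i : ℕ) ≤ (τ i : ℕ) + 1 := by
  have := abs_le.mp (h i)
  omega

/-- A bandwidth-1 permutation that moves `p` up to `p+1` must move `p+1` down to `p`. -/
lemma band1_swap {n : ℕ} {τ : Equiv.Perm (Fin n)} (h : band1 τ) :
    ∀ (m : ℕ) (p q : Fin n), n - (p : ℕ) ≤ m → (τ p : ℕ) = (p : ℕ) + 1 →
      (q : ℕ) = (p : ℕ) + 1 → (τ q : ℕ) = (p : ℕ) := by
  intro m
  induction m with
  | zero => intro p q hm hp hq; have := p.isLt; omega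
  | succ m ih =>
    intro p q hm hp hq
    have hb := band1_le h q
    have hlt := (τ q).isLt
    have hne : (τ q : ℕ) ≠ (p : ℕ) + 1 := by
      intro hcontra
      have heq : τ q = τ p := Fin.ext (by rw [hcontra, hp])
      have := congrArg Fin.val (τ.injective heq)
      omega
    have hcase : (τ q : ℕ) = (p : ℕ) ∨ (τ q : ℕ) = (p : ℕ) + 2 := by omega
    rcases hcase with hc | hc
    · exact hc
    · exfalso
      have hr2 : (p : ℕ) + 2 < n := by omega
      have h1 : (τ q : ℕ) = (q : ℕ) + 1 := by omega
      have h2 : ((⟨(p : ℕ) + 2, hr2⟩ : Fin n) : ℕ) = (q : ℕ) + 1 := by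
        show (p : ℕ) + 2 = (q : ℕ) + 1; omega
      have h3 := ih q ⟨(p : ℕ) + 2, hr2⟩ (by omega) h1 h2
      have heq : τ ⟨(p : ℕ) + 2, hr2⟩ = τ p := Fin.ext (by rw [h3, hp, hq])
      have hval := congrArg Fin.val (τ.injective heq)
      have : (p : ℕ) + 2 = (p : ℕ) := hval
      omega

/-- `τ` moves some element across cut `c` (rightward). -/
def Rc {n : ℕ} (c : ℕ) (τ : Equiv.Perm (Fin n)) : Prop :=
  ∃ p : Fin n, (p : ℕ) + 1 = c ∧ (τ p : ℕ) = c

/-- Number of the first `w` tokens located at positions `≥ c` under `σ`. -/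
def Xc {n : ℕ} (w c : ℕ) (σ : Equiv.Perm (Fin n)) : ℕ :=
  (Finset.univ.filter (fun i : Fin n => (i : ℕ) < w ∧ c ≤ (σ i : ℕ))).card

lemma Xc_step_no {n w c : ℕ} {τ σ : Equiv.Perm (Fin n)} (hτ : band1 τ)
    (hR : ¬ Rc c τ) : Xc w c (τ * σ) ≤ Xc w c σ := by
  apply Finset.card_le_card
  intro i hi
  rw [Finset.mem_filter] at hi
  simp only [Finset.mem_filter, Finset.mem_univ, true_and, Equiv.Perm.mul_apply] at hi ⊢
  refine ⟨hi.1, ?_⟩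
  by_contra hlt
  push_neg at hlt
  have hb := band1_le hτ (σ i)
  exact hR ⟨σ i, by omega, by omega⟩

lemma Xc_step {n w c : ℕ} {τ σ : Equiv.Perm (Fin n)} (hτ : band1 τ) :
    Xc w c (τ * σ) ≤ Xc w c σ + 1 := by
  by_cases hR : Rc c τ
  · obtain ⟨p, hp1, hp2⟩ := hR
    have hsub : (Finset.univ.filter (fun i : Fin n => (i : ℕ) < w ∧ c ≤ ((τ * σ) i : ℕ)))
        ⊆ insert (σ.symm p)
          (Finset.univ.filter (fun i : Fin n => (i : ℕ) < w ∧ c ≤ (σ i : ℕ))) := by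
      intro i hi
      rw [Finset.mem_filter] at hi
      simp only [Finset.mem_filter, Finset.mem_univ, true_and, Equiv.Perm.mul_apply] at hi
      rcases le_or_gt c ((σ i : ℕ)) with hc | hc
      · exact Finset.mem_insert_of_mem
          (by simp only [Finset.mem_filter, Finset.mem_univ, true_and]; exact ⟨hi.1, hc⟩)
      · have hb := band1_le hτ (σ i)
        have hσi : σ i = p := Fin.ext (by omega)
        have : i = σ.symm p := by rw [← hσi]; simp
        rw [this]
        exact Finset.mem_insert_self _ _
    calc Xc w c (τ * σ) ≤ (insert (σ.symm p)
          (Finset.univ.filter (fun i : Fin n => (i : ℕ) < w ∧ c ≤ (σ i : ℕ)))).card :=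
            Finset.card_le_card hsub
      _ ≤ Xc w c σ + 1 := Finset.card_insert_le _ _
  · exact le_trans (Xc_step_no hτ hR) (Nat.le_succ _)

lemma not_RR {n c : ℕ} {τ : Equiv.Perm (Fin n)} (hτ : band1 τ)
    (h1 : Rc c τ) (h2 : Rc (c + 1) τ) : False := by
  obtain ⟨p, hp1, hp2⟩ := h1
  obtain ⟨q, hq1, hq2⟩ := h2
  have := band1_swap hτ n p q (by omega) (by omega) (by omega)
  omega

lemma Y_step {n w : ℕ} {τ σ : Equiv.Perm (Fin n)} (hτ : band1 τ) :
    Xc w w (τ * σ) + Xc w (w + 1) (τ * σ) ≤ Xc w w σ + Xc w (w + 1) σ + 1 := by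
  by_cases hR : Rc w τ
  · have h2 : ¬ Rc (w + 1) τ := fun h => not_RR hτ hR h
    have ha := Xc_step (w := w) (c := w) (σ := σ) hτ
    have hb := Xc_step_no (w := w) (σ := σ) hτ h2
    omega
  · have ha := Xc_step_no (w := w) (σ := σ) hτ hR
    have hb := Xc_step (w := w) (c := w + 1) (σ := σ) hτ
    omega

lemma Y_list {n w : ℕ} : ∀ l : List (Equiv.Perm (Fin n)), (∀ τ ∈ l, band1 τ) →
    Xc w w l.prod + Xc w (w + 1) l.prod
      ≤ Xc (n := n) w w 1 + Xc (n := n) w (w + 1) 1 + l.length := by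
  intro l
  induction l with
  | nil => intro _; simp
  | cons τ l ih =>
    intro h
    have h1 : band1 τ := h τ (by simp)
    have h2 := ih (fun τ' h' => h τ' (by simp [h']))
    have h3 := Y_step (σ := l.prod) (w := w) h1
    simp only [List.prod_cons, List.length_cons]
    omega

lemma Xc_one {n w c : ℕ} (hc : w ≤ c) : Xc w c (1 : Equiv.Perm (Fin n)) = 0 := by
  simp only [Xc, Finset.card_eq_zero, Finset.filter_eq_empty_iff]
  intro i _
  simp only [Equiv.Perm.coe_one, id_eq]
  omega

lemma card_val_filter {n a b : ℕ} (hb : b ≤ n) :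
    (Finset.univ.filter (fun i : Fin n => a ≤ (i : ℕ) ∧ (i : ℕ) < b)).card = b - a := by
  rw [← Nat.card_Ico a b]
  refine Finset.card_bij' (fun i _ => (i : ℕ))
      (fun p hp => (⟨p, lt_of_lt_of_le (Finset.mem_Ico.mp hp).2 hb⟩ : Fin n))
      (fun i hi => ?_) (fun p hp => ?_) (fun i hi => Fin.ext rfl) (fun p hp => rfl)
  · simp only [Finset.mem_filter, Finset.mem_univ, true_and] at hi
    exact Finset.mem_Ico.mpr hi
  · simp only [Finset.mem_filter, Finset.mem_univ, true_and]
    exact Finset.mem_Ico.mp hp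

end StrangExact

open StrangExact in
/-- the bound `2w − 1` in Strang's conjecture is exact: for every
`w ≥ 1` there are `n` and a bandwidth-`w` permutation of `{1,…,n}` that is not
a product of fewer than `2w − 1` permutations of bandwidth 1. -/
theorem strang_bound_exact (w : ℕ) (hw : 1 ≤ w) :
    ∃ (n : ℕ) (π : Equiv.Perm (Fin n)),
      (∀ i : Fin n, |((π i : ℕ) : ℤ) - ((i : ℕ) : ℤ)| ≤ (w : ℤ)) ∧
      ∀ (k : ℕ) (ρ : Fin k → Equiv.Perm (Fin n)),
        (∀ j, ∀ i : Fin n, |(((ρ j) i : ℕ) : ℤ) - ((i : ℕ) : ℤ)| ≤ 1) →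
        π = (List.ofFn ρ).prod → 2 * w - 1 ≤ k := by
  haveI : NeZero (w + w) := ⟨by omega⟩
  set π : Equiv.Perm (Fin (w + w)) := Equiv.addRight (⟨w, by omega⟩ : Fin (w + w)) with hπ
  have hval : ∀ i : Fin (w + w), (π i : ℕ) = ((i : ℕ) + w) % (w + w) := by
    intro i
    simp [hπ, Equiv.coe_addRight, Fin.val_add]
  have hval2 : ∀ i : Fin (w + w), ((i : ℕ) < w → (π i : ℕ) = (i : ℕ) + w) ∧
      (w ≤ (i : ℕ) → (π i : ℕ) = (i : ℕ) - w) := by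
    intro i
    have hi := i.isLt
    constructor
    · intro h
      rw [hval i, Nat.mod_eq_of_lt (by omega)]
    · intro h
      rw [hval i, Nat.mod_eq_sub_mod (by omega), Nat.mod_eq_of_lt (by omega)]
      omega
  refine ⟨w + w, π, ?_, ?_⟩
  · intro i
    have hi := i.isLt
    have h2 := hval2 i
    rw [abs_le]
    rcases lt_or_ge (i : ℕ) w with h | h
    · have := h2.1 h; constructor <;> omega
    · have := h2.2 h; constructor <;> omega
  · intro k ρ hband hprod
    have hb : ∀ τ ∈ List.ofFn ρ, band1 τ := by
      intro τ hτ
      rw [List.mem_ofFn] at hτ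
      obtain ⟨j, rfl⟩ := hτ
      exact hband j
    have hmain := Y_list (w := w) (List.ofFn ρ) hb
    rw [← hprod, List.length_ofFn] at hmain
    rw [Xc_one (le_refl w), Xc_one (by omega : w ≤ w + 1)] at hmain
    have hXw : Xc w w π = w := by
      have hfe : (Finset.univ.filter (fun i : Fin (w + w) => (i : ℕ) < w ∧ w ≤ (π i : ℕ)))
          = (Finset.univ.filter (fun i : Fin (w + w) => 0 ≤ (i : ℕ) ∧ (i : ℕ) < w)) := by
        apply Finset.filter_congr
        intro i _
        have h2 := hval2 i
        constructor
        · intro h; exact ⟨Nat.zero_le _, h.1⟩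
        · intro h; have := h2.1 h.2; exact ⟨h.2, by omega⟩
      rw [Xc, hfe, card_val_filter (by omega)]
      omega
    have hXw1 : Xc w (w + 1) π = w - 1 := by
      have hfe : (Finset.univ.filter (fun i : Fin (w + w) => (i : ℕ) < w ∧ w + 1 ≤ (π i : ℕ)))
          = (Finset.univ.filter (fun i : Fin (w + w) => 1 ≤ (i : ℕ) ∧ (i : ℕ) < w)) := by
        apply Finset.filter_congr
        intro i _
        have h2 := hval2 i
        constructor
        · intro h; have := h2.1 h.1; exact ⟨by omega, h.1⟩
        · intro h; have := h2.1 h.2; exact ⟨h.2, by omega⟩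
      rw [Xc, hfe, card_val_filter (by omega)]
    rw [hXw, hXw1] at hmain
    omega
end

section
/- Let π be a permutation of {1,…,n} and suppose π is a product of k permutations of bandwidth 1. Then there exist permutations ρ¹, …, ρᵏ of {1,…,n}, each of bandwidth 1, with π = ρ¹ ∘ ⋯ ∘ ρᵏ and such that the sum over i of the number of transpositions composing ρⁱ (i.e., the sum over i of half the number of non-fixed points of ρⁱ) equals the number of inversions of π, i.e., the number of pairs (i, j) with i < j and π(i) > π(j). -/
open Equiv Finset

variable {n : ℕ}

def Bw1 (ρ : Equiv.Perm (Fin n)) : Prop :=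
  ∀ i : Fin n, |((((ρ i) : ℕ) : ℤ)) - ((i : ℕ) : ℤ)| ≤ 1

def sp (ρ : Equiv.Perm (Fin n)) : Finset (Fin n × Fin n) :=
  Finset.univ.filter fun p => p.1 < p.2 ∧ ρ p.1 = p.2

def invs (π : Equiv.Perm (Fin n)) : Finset (Fin n × Fin n) :=
  Finset.univ.filter fun p => p.1 < p.2 ∧ π p.2 < π p.1

def msr (L : List (Equiv.Perm (Fin n))) : ℕ := (L.map fun ρ => (sp ρ).card).sum

lemma mem_sp {ρ : Perm (Fin n)} {p : Fin n × Fin n} :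
    p ∈ sp ρ ↔ p.1 < p.2 ∧ ρ p.1 = p.2 := by simp [sp]

lemma bw1_bounds {ρ : Perm (Fin n)} (h : Bw1 ρ) (i : Fin n) :
    ((ρ i : Fin n) : ℕ) ≤ (i : ℕ) + 1 ∧ (i : ℕ) ≤ ((ρ i : Fin n) : ℕ) + 1 := by
  have := h i; rw [abs_le] at this; omega

lemma swap_of_desc {ρ : Perm (Fin n)} (h : Bw1 ρ) {i j : Fin n} (hij : i < j)
    (hd : ρ j < ρ i) : ρ i = j ∧ ρ j = i := by
  have h1 := bw1_bounds h i
  have h2 := bw1_bounds h j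
  rw [Fin.lt_def] at hij hd
  constructor <;> (apply Fin.ext; omega)

lemma bw1_pair_down {ρ : Perm (Fin n)} (h : Bw1 ρ) :
    ∀ (v : ℕ) (i : Fin n), (i : ℕ) = v → ((ρ i : Fin n) : ℕ) + 1 = (i : ℕ) →
      ρ (ρ i) = i := by
  intro v
  induction v using Nat.strong_induction_on with
  | _ v ih =>
    intro i hv hstep
    have hbj := bw1_bounds h (ρ i)
    have hne : ((ρ (ρ i) : Fin n) : ℕ) ≠ ((ρ i : Fin n) : ℕ) := by
      intro e
      have h1 : ρ (ρ i) = ρ i := Fin.ext e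
      have h2 : ρ i = i := ρ.injective h1
      have := congrArg Fin.val h2
      omega
    rcases show ((ρ (ρ i) : Fin n) : ℕ) + 1 = ((ρ i : Fin n) : ℕ) ∨
        ((ρ (ρ i) : Fin n) : ℕ) = ((ρ i : Fin n) : ℕ) + 1 by omega with hc | hc
    · have hrec := ih ((ρ i : Fin n) : ℕ) (by omega) (ρ i) rfl hc
      have h1 : ρ (ρ i) = i := ρ.injective hrec
      have := congrArg Fin.val h1
      omega
    · exact Fin.ext (by omega)

lemma bw1_pair_up {ρ : Perm (Fin n)} (h : Bw1 ρ) :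
    ∀ (v : ℕ) (i : Fin n), n - (i : ℕ) = v → ((i : ℕ)) + 1 = ((ρ i : Fin n) : ℕ) →
      ρ (ρ i) = i := by
  intro v
  induction v using Nat.strong_induction_on with
  | _ v ih =>
    intro i hv hstep
    have hbj := bw1_bounds h (ρ i)
    have hin : ((ρ i : Fin n) : ℕ) < n := (ρ i).isLt
    have hin2 : (i : ℕ) < n := i.isLt
    have hne : ((ρ (ρ i) : Fin n) : ℕ) ≠ ((ρ i : Fin n) : ℕ) := by
      intro e
      have h1 : ρ i = i := ρ.injective (Fin.ext e)
      have := congrArg Fin.val h1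
      omega
    rcases show ((ρ (ρ i) : Fin n) : ℕ) = ((ρ i : Fin n) : ℕ) + 1 ∨
        ((ρ (ρ i) : Fin n) : ℕ) + 1 = ((ρ i : Fin n) : ℕ) by omega with hc | hc
    · have hrec := ih (n - ((ρ i : Fin n) : ℕ)) (by omega) (ρ i) rfl hc.symm
      have h1 : ρ (ρ i) = i := ρ.injective hrec
      have := congrArg Fin.val h1
      omega
    · exact Fin.ext (by omega)

lemma bw1_invol {ρ : Perm (Fin n)} (h : Bw1 ρ) (i : Fin n) : ρ (ρ i) = i := by
  have hb := bw1_bounds h i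
  rcases show ((ρ i : Fin n) : ℕ) = (i : ℕ) ∨ ((ρ i : Fin n) : ℕ) + 1 = (i : ℕ) ∨
      ((i : ℕ)) + 1 = ((ρ i : Fin n) : ℕ) by omega with hc | hc | hc
  · have e : ρ i = i := Fin.ext hc
    rw [e, e]
  · exact bw1_pair_down h (i : ℕ) i rfl hc
  · exact bw1_pair_up h (n - (i : ℕ)) i rfl hc

lemma invs_one : (invs (1 : Perm (Fin n))) = ∅ := by
  ext p
  simp only [invs, mem_filter, mem_univ, true_and, notMem_empty, iff_false]
  simp only [Perm.one_apply]
  rintro ⟨h1, h2⟩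
  exact absurd h2 (asymm h1)

lemma invs_mul {ρ w : Perm (Fin n)} (hρ : Bw1 ρ)
    (h : ∀ p ∈ sp ρ, w p.1 < w p.2) :
    (invs (w * ρ)).card = (invs w).card + (sp ρ).card := by
  have hinj : Function.Injective
      (fun p : Fin n × Fin n => ((ρ p.1 : Fin n), (ρ p.2 : Fin n))) := by
    intro p q e
    simp only [Prod.mk.injEq] at e
    exact Prod.ext (ρ.injective e.1) (ρ.injective e.2)
  have hset : invs (w * ρ) = sp ρ ∪ (invs w).image (fun p => (ρ p.1, ρ p.2)) := by
    ext ⟨i, j⟩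
    simp only [invs, sp, mem_filter, mem_univ, true_and, mem_union, mem_image,
      Prod.mk.injEq, Prod.exists]
    simp only [Perm.mul_apply]
    constructor
    · rintro ⟨hij, hinv⟩
      rcases lt_or_ge (ρ i) (ρ j) with hlt | hle
      · exact Or.inr ⟨ρ i, ρ j, ⟨hlt, hinv⟩, bw1_invol hρ i, bw1_invol hρ j⟩
      · have hne : ρ j ≠ ρ i := fun e => (ne_of_lt hij) ((ρ.injective e).symm)
        have hlt : ρ j < ρ i := lt_of_le_of_ne hle hne
        exact Or.inl ⟨hij, (swap_of_desc hρ hij hlt).1⟩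
    · rintro (⟨hij, he⟩ | ⟨x, y, ⟨hxy, hw⟩, ex, ey⟩)
      · refine ⟨hij, ?_⟩
        have hji : ρ j = i := by rw [← he, bw1_invol hρ]
        rw [hji, he]
        exact h (i, j) (mem_sp.2 ⟨hij, he⟩)
      · subst ex ey
        constructor
        · by_contra hno
          have hne : ρ y ≠ ρ x := fun e => (ne_of_lt hxy) (ρ.injective e.symm)
          have hlt : ρ y < ρ x := lt_of_le_of_ne (not_lt.1 hno) hne
          obtain ⟨e1, _⟩ := swap_of_desc hρ hxy hlt
          exact absurd hw (asymm (h (x, y) (mem_sp.2 ⟨hxy, e1⟩)))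
        · rw [bw1_invol hρ, bw1_invol hρ]
          exact hw
  have hdisj : Disjoint (sp ρ)
      ((invs w).image fun p => ((ρ p.1 : Fin n), (ρ p.2 : Fin n))) := by
    rw [Finset.disjoint_left]
    rintro ⟨i, j⟩ hsp himg
    rw [mem_sp] at hsp
    obtain ⟨hsp1, hsp2⟩ := hsp
    dsimp only at hsp1 hsp2
    simp only [mem_image, invs, mem_filter, mem_univ, true_and, Prod.mk.injEq,
      Prod.exists] at himg
    obtain ⟨x, y, ⟨hxy, _⟩, ex, ey⟩ := himg
    have hx : x = j := by rw [← hsp2, ← ex, bw1_invol hρ]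
    have hy : y = i := by
      have h1 : ρ j = i := by rw [← hsp2, bw1_invol hρ]
      rw [← h1, ← ey, bw1_invol hρ]
    rw [hx, hy] at hxy
    exact absurd hsp1 (asymm hxy)
  rw [hset, Finset.card_union_of_disjoint hdisj,
    Finset.card_image_of_injective _ hinj, add_comm]

lemma nodrop : ∀ (L : List (Perm (Fin n))), (∀ ρ ∈ L, Bw1 ρ) →
    (∀ (A : List (Perm (Fin n))) ρt B, L = A ++ ρt :: B →
      ∀ p ∈ sp ρt, A.prod p.1 < A.prod p.2) →
    (invs L.prod).card = msr L := by
  intro L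
  induction L using List.reverseRecOn with
  | nil => simp [msr, invs_one]
  | append_singleton M ρ ih =>
    intro hbw hnd
    have hρ : Bw1 ρ := hbw ρ (by simp)
    have h1 : ∀ p ∈ sp ρ, M.prod p.1 < M.prod p.2 := hnd M ρ [] rfl
    have hM : ∀ τ ∈ M, Bw1 τ := fun τ hτ => hbw τ (by simp [hτ])
    have hndM : ∀ (A : List (Perm (Fin n))) ρt B, M = A ++ ρt :: B →
        ∀ p ∈ sp ρt, A.prod p.1 < A.prod p.2 := by
      intro A ρt B hMeq
      exact hnd A ρt (B ++ [ρ]) (by rw [hMeq]; simp)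
    rw [List.prod_append, List.prod_cons, List.prod_nil, mul_one,
      invs_mul hρ h1, ih hM hndM]
    simp [msr]

lemma flipL : ∀ (A : List (Perm (Fin n))), (∀ σ ∈ A, Bw1 σ) →
    ∀ a b : Fin n, a < b → A.prod b < A.prod a →
    ∃ (C : List (Perm (Fin n))) (σ : Perm (Fin n)) (D : List (Perm (Fin n))),
      A = C ++ σ :: D ∧ D.prod a < D.prod b ∧ σ (D.prod a) = D.prod b := by
  intro A
  induction A with
  | nil =>
    intro _ a b hab hd
    simp only [List.prod_nil, Perm.one_apply] at hd
    exact absurd hab (asymm hd)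
  | cons σ D ihD =>
    intro hbw a b hab hd
    rw [List.prod_cons] at hd
    rcases lt_trichotomy (D.prod a) (D.prod b) with hlt | heq | hgt
    · have hσ : Bw1 σ := hbw σ (by simp)
      have h' : σ (D.prod b) < σ (D.prod a) := by
        simpa only [Perm.mul_apply] using hd
      exact ⟨[], σ, D, by simp, hlt, (swap_of_desc hσ hlt h').1⟩
    · exact absurd ((Equiv.injective _ heq) : a = b) (ne_of_lt hab)
    · obtain ⟨C, σ', D', hD, hx, hy⟩ :=
        ihD (fun τ hτ => hbw τ (by simp [hτ])) a b hab hgt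
      exact ⟨σ :: C, σ', D', by rw [hD, List.cons_append], hx, hy⟩

lemma removal {σ : Perm (Fin n)} (h : Bw1 σ) {a b : Fin n} (hab : a < b) (hσ : σ a = b) :
    Bw1 (σ * Equiv.swap a b) ∧ sp (σ * Equiv.swap a b) = (sp σ).erase (a, b) := by
  have hba : σ b = a := by rw [← hσ, bw1_invol h]
  have hb1 : (σ * Equiv.swap a b) a = a := by
    simp [Perm.mul_apply, Equiv.swap_apply_left, hba]
  have hb2 : (σ * Equiv.swap a b) b = b := by
    simp [Perm.mul_apply, Equiv.swap_apply_right, hσ]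
  have hb3 : ∀ i, i ≠ a → i ≠ b → (σ * Equiv.swap a b) i = σ i := by
    intro i h1 h2
    simp [Perm.mul_apply, Equiv.swap_apply_of_ne_of_ne h1 h2]
  constructor
  · intro i
    rcases eq_or_ne i a with rfl | h1
    · rw [hb1]; simp
    rcases eq_or_ne i b with rfl | h2
    · rw [hb2]; simp
    · rw [hb3 i h1 h2]; exact h i
  · ext ⟨i, j⟩
    rw [mem_sp, Finset.mem_erase, mem_sp]
    dsimp only
    constructor
    · rintro ⟨hij, he⟩
      rcases eq_or_ne i a with rfl | h1
      · rw [hb1] at he; exact absurd (he ▸ hij) (lt_irrefl _)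
      rcases eq_or_ne i b with rfl | h2
      · rw [hb2] at he; exact absurd (he ▸ hij) (lt_irrefl _)
      · rw [hb3 i h1 h2] at he
        refine ⟨?_, hij, he⟩
        intro e
        exact h1 (congrArg Prod.fst e)
    · rintro ⟨hne, hij, he⟩
      rcases eq_or_ne i a with rfl | h1
      · exfalso
        apply hne
        have hjb : j = b := by rw [← he, hσ]
        rw [hjb]
      rcases eq_or_ne i b with rfl | h2
      · rw [hba] at he
        rw [← he] at hij
        exact absurd hab (asymm hij)
      · exact ⟨hij, by rw [hb3 i h1 h2]; exact he⟩

lemma main : ∀ (m : ℕ) (L : List (Perm (Fin n))), msr L = m → (∀ ρ ∈ L, Bw1 ρ) →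
    ∃ L' : List (Perm (Fin n)), L'.length = L.length ∧ (∀ ρ ∈ L', Bw1 ρ) ∧
      L'.prod = L.prod ∧ msr L' = (invs L.prod).card := by
  intro m
  induction m using Nat.strong_induction_on with
  | _ m ih =>
    intro L hm hbw
    by_cases hd : ∀ (A : List (Perm (Fin n))) ρt B, L = A ++ ρt :: B →
        ∀ p ∈ sp ρt, A.prod p.1 < A.prod p.2
    · exact ⟨L, rfl, hbw, rfl, (nodrop L hbw hd).symm⟩
    · push_neg at hd
      obtain ⟨A, ρt, B, hL, p, hp, hnlt⟩ := hd
      rw [mem_sp] at hp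
      have hbwA : ∀ σ ∈ A, Bw1 σ := fun σ hσ => hbw σ (by rw [hL]; simp [hσ])
      have hbwρt : Bw1 ρt := hbw ρt (by rw [hL]; simp)
      have hbwB : ∀ σ ∈ B, Bw1 σ := fun σ hσ => hbw σ (by rw [hL]; simp [hσ])
      have hab : A.prod p.2 < A.prod p.1 := by
        refine lt_of_le_of_ne hnlt ?_
        intro e
        exact absurd ((Equiv.injective _ e) : p.2 = p.1) (ne_of_lt hp.1).symm
      obtain ⟨C, σ, D, hA, hxy, hσxy⟩ := flipL A hbwA p.1 p.2 hp.1 hab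
      set x := D.prod p.1 with hxdef
      set y := D.prod p.2 with hydef
      have hbwσ : Bw1 σ := hbwA σ (by rw [hA]; simp)
      have hρtp2 : ρt p.2 = p.1 := by rw [← hp.2, bw1_invol hbwρt]
      obtain ⟨hbσ', hspσ'⟩ := removal hbwσ hxy hσxy
      obtain ⟨hbρ', hspρ'⟩ := removal hbwρt hp.1 hp.2
      -- commutation facts
      have csw1 : Equiv.swap x y * D.prod = D.prod * Equiv.swap p.1 p.2 := by
        rw [hxdef, hydef, ← mul_swap_eq_swap_mul]
      have csw2 : ρt * Equiv.swap p.1 p.2 = Equiv.swap p.1 p.2 * ρt := by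
        rw [mul_swap_eq_swap_mul, hp.2, hρtp2, Equiv.swap_comm]
      have csw1R : ∀ z : Perm (Fin n),
          Equiv.swap x y * (D.prod * z) = D.prod * (Equiv.swap p.1 p.2 * z) := by
        intro z; rw [← mul_assoc, csw1, mul_assoc]
      have csw2R : ∀ z : Perm (Fin n),
          Equiv.swap p.1 p.2 * (ρt * z) = ρt * (Equiv.swap p.1 p.2 * z) := by
        intro z; rw [← mul_assoc, ← csw2, mul_assoc]
      have swpR : ∀ z : Perm (Fin n),
          Equiv.swap p.1 p.2 * (Equiv.swap p.1 p.2 * z) = z := by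
        intro z; rw [← mul_assoc, Equiv.swap_mul_self, one_mul]
      set L₂ : List (Perm (Fin n)) :=
        C ++ (σ * Equiv.swap x y) :: (D ++ (ρt * Equiv.swap p.1 p.2) :: B) with hL₂
      have hprodeq : L₂.prod = L.prod := by
        rw [hL₂, hL, hA]
        simp only [List.prod_append, List.prod_cons, mul_assoc]
        rw [csw1R, csw2R, swpR]
      have hbwL₂ : ∀ τ ∈ L₂, Bw1 τ := by
        intro τ hτ
        rw [hL₂] at hτ
        simp only [List.mem_append, List.mem_cons] at hτ
        rcases hτ with hC | rfl | hD | rfl | hB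
        · exact hbwA τ (by rw [hA]; simp [hC])
        · exact hbσ'
        · exact hbwA τ (by rw [hA]; simp [hD])
        · exact hbρ'
        · exact hbwB τ hB
      have hcard1 : (sp (σ * Equiv.swap x y)).card + 1 = (sp σ).card := by
        rw [hspσ']
        exact Finset.card_erase_add_one (mem_sp.2 ⟨hxy, hσxy⟩)
      have hcard2 : (sp (ρt * Equiv.swap p.1 p.2)).card + 1 = (sp ρt).card := by
        rw [hspρ']
        exact Finset.card_erase_add_one (mem_sp.2 hp)
      have hm2 : msr L₂ + 2 = msr L := by
        rw [hL₂, hL, hA]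
        simp only [msr, List.map_append, List.map_cons, List.sum_append, List.sum_cons]
        omega
      obtain ⟨L', hlen, hbw', hprod', hmsr'⟩ :=
        ih (msr L₂) (by omega) L₂ rfl hbwL₂
      refine ⟨L', ?_, hbw', hprod'.trans hprodeq, ?_⟩
      · rw [hlen, hL₂, hL, hA]; simp
      · rw [hmsr', hprodeq]

lemma cnt_eq {σ : Perm (Fin n)} (h : Bw1 σ) :
    (Finset.univ.filter fun i : Fin n => σ i ≠ i).card = 2 * (sp σ).card := by
  have himg : (Finset.univ.filter fun i : Fin n => σ i ≠ i)
      = (sp σ).image Prod.fst ∪ (sp σ).image Prod.snd := by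
    ext i
    simp only [mem_filter, mem_univ, true_and, mem_union, mem_image]
    constructor
    · intro hi
      rcases lt_trichotomy (σ i) i with hlt | heq | hgt
      · exact Or.inr ⟨(σ i, i), mem_sp.2 ⟨hlt, bw1_invol h i⟩, rfl⟩
      · exact absurd heq hi
      · exact Or.inl ⟨(i, σ i), mem_sp.2 ⟨hgt, rfl⟩, rfl⟩
    · rintro (⟨q, hq, rfl⟩ | ⟨q, hq, rfl⟩)
      · rw [mem_sp] at hq
        rw [hq.2]
        exact ne_of_gt hq.1
      · rw [mem_sp] at hq
        have h1 : σ q.2 = q.1 := by rw [← hq.2, bw1_invol h]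
        rw [h1]
        exact ne_of_lt hq.1
  have hinj1 : Set.InjOn Prod.fst ((sp σ : Finset (Fin n × Fin n)) : Set (Fin n × Fin n)) := by
    intro q hq r hr e
    have hq' := mem_sp.1 (Finset.mem_coe.1 hq)
    have hr' := mem_sp.1 (Finset.mem_coe.1 hr)
    have h2 : q.2 = r.2 := by rw [← hq'.2, ← hr'.2, e]
    exact Prod.ext e h2
  have hinj2 : Set.InjOn Prod.snd ((sp σ : Finset (Fin n × Fin n)) : Set (Fin n × Fin n)) := by
    intro q hq r hr e
    have hq' := mem_sp.1 (Finset.mem_coe.1 hq)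
    have hr' := mem_sp.1 (Finset.mem_coe.1 hr)
    have h2 : q.1 = r.1 := by
      have e1 : σ q.2 = q.1 := by rw [← hq'.2, bw1_invol h]
      have e2 : σ r.2 = r.1 := by rw [← hr'.2, bw1_invol h]
      rw [← e1, ← e2, e]
    exact Prod.ext h2 e
  have hdisj : Disjoint ((sp σ).image Prod.fst) ((sp σ).image Prod.snd) := by
    rw [Finset.disjoint_left]
    intro i hi1 hi2
    obtain ⟨q, hq, hq1⟩ := Finset.mem_image.1 hi1
    obtain ⟨r, hr, hr1⟩ := Finset.mem_image.1 hi2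
    have hq' := mem_sp.1 hq
    have hr' := mem_sp.1 hr
    have e1 : σ i = q.2 := by rw [← hq1, hq'.2]
    have e2 : σ i = r.1 := by
      rw [← hr1, ← hr'.2, bw1_invol h]
    have : q.2 = r.1 := by rw [← e1, e2]
    have hlt1 : i < q.2 := hq1 ▸ hq'.1
    have hlt2 : r.1 < i := hr1 ▸ hr'.1
    rw [this] at hlt1
    exact absurd hlt1 (asymm hlt2)
  rw [himg, Finset.card_union_of_disjoint hdisj, Finset.card_image_of_injOn hinj1,
    Finset.card_image_of_injOn hinj2]
  omega

lemma msr_ofFn {k : ℕ} (f : Fin k → Perm (Fin n)) :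
    msr (List.ofFn f) = ∑ j, (sp (f j)).card := by
  simp [msr, List.map_ofFn, List.sum_ofFn]

/-- if `π` is a product of `k` bandwidth-1 permutations, then there
is such a factorization `π = ρ¹ ∘ ⋯ ∘ ρᵏ` in which the total number of
transpositions used (half the number of non-fixed points of each factor) equals
the number of inversions of `π`. -/
theorem reduced_bandwidth_one_factorization (n k : ℕ) (π : Equiv.Perm (Fin n))
    (ρ₀ : Fin k → Equiv.Perm (Fin n))
    (hρ₀ : ∀ j, ∀ i : Fin n, |(((ρ₀ j) i : ℕ) : ℤ) - ((i : ℕ) : ℤ)| ≤ 1)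
    (hπ₀ : π = (List.ofFn ρ₀).prod) :
    ∃ ρ : Fin k → Equiv.Perm (Fin n),
      (∀ j, ∀ i : Fin n, |(((ρ j) i : ℕ) : ℤ) - ((i : ℕ) : ℤ)| ≤ 1) ∧
      π = (List.ofFn ρ).prod ∧
      ∑ j : Fin k, (Finset.univ.filter fun i : Fin n => (ρ j) i ≠ i).card / 2 =
        (Finset.univ.filter fun p : Fin n × Fin n => p.1 < p.2 ∧ π p.2 < π p.1).card := by
  obtain ⟨L', hlen, hbw', hprod', hmsr'⟩ :=
    main (msr (List.ofFn ρ₀)) (List.ofFn ρ₀) rfl (by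
      intro ρ hρ
      rw [List.mem_ofFn] at hρ
      obtain ⟨j, rfl⟩ := hρ
      exact hρ₀ j)
  rw [List.length_ofFn] at hlen
  subst hlen
  have hmem : ∀ j : Fin L'.length, L'.get j ∈ L' := fun j => List.get_mem L' j
  refine ⟨L'.get, fun j => hbw' _ (hmem j), ?_, ?_⟩
  · rw [List.ofFn_get]
    rw [hπ₀, ← hprod']
  · have hπ : invs π = invs L'.prod := by rw [hπ₀, hprod']
    calc ∑ j : Fin L'.length,
          (Finset.univ.filter fun i : Fin n => (L'.get j) i ≠ i).card / 2
        = ∑ j : Fin L'.length, (sp (L'.get j)).card := by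
          refine Finset.sum_congr rfl fun j _ => ?_
          have hmem : L'.get j ∈ L' := List.get_mem L' j
          have hb : Bw1 (L'.get j) := hbw' _ hmem
          rw [cnt_eq hb]
          omega
      _ = msr (List.ofFn L'.get) := (msr_ofFn _).symm
      _ = msr L' := by rw [List.ofFn_get]
      _ = (invs ((List.ofFn ρ₀).prod)).card := hmsr'
      _ = (Finset.univ.filter fun p : Fin n × Fin n =>
            p.1 < p.2 ∧ π p.2 < π p.1).card := by rw [← hπ₀]; rfl
end

section
/- Let π be a permutation of {1,…,n} and let M = {π(j) − i : 1 ≤ i < j ≤ n, π(i) > π(j)}. Then there exist permutations σ^k of {1,…,n} of bandwidth 1, indexed by the integers k with −n+1 ≤ k ≤ n−1, such that π = σ^{−n+1} ∘ σ^{−n+2} ∘ ⋯ ∘ σ^{n−1} and σ^k is the identity whenever k ∉ M. -/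
open Finset

namespace DF

variable {n : ℕ} (π : Equiv.Perm (Fin n))

/-- height of strand `x` when cut by the diagonal line `m`. -/
def hh (m : ℤ) (x : Fin n) : ℤ := max ((x : ℕ) : ℤ) (((π x : ℕ) : ℤ) - m)

/-- `y` is strictly below `x` on the cut line `m` (ties broken: smaller index above). -/
def LtR (m : ℤ) (y x : Fin n) : Prop :=
  hh π m y < hh π m x ∨ (hh π m y = hh π m x ∧ x < y)

instance (m : ℤ) (y x : Fin n) : Decidable (LtR π m y x) := by
  unfold LtR; infer_instance

lemma LtR_irrefl (m : ℤ) (x : Fin n) : ¬ LtR π m x x := by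
  simp [LtR]

lemma LtR_trans {m : ℤ} {z y x : Fin n} (h1 : LtR π m z y) (h2 : LtR π m y x) :
    LtR π m z x := by
  rcases h1 with h1 | ⟨e1, l1⟩ <;> rcases h2 with h2 | ⟨e2, l2⟩
  · exact Or.inl (h1.trans h2)
  · exact Or.inl (e2 ▸ h1)
  · exact Or.inl (e1 ▸ h2)
  · exact Or.inr ⟨e1.trans e2, l2.trans l1⟩

lemma LtR_total {m : ℤ} {y x : Fin n} (hne : y ≠ x) : LtR π m y x ∨ LtR π m x y := by
  rcases lt_trichotomy (hh π m y) (hh π m x) with h | h | h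
  · exact Or.inl (Or.inl h)
  · rcases lt_or_gt_of_ne (fun e => hne (Fin.ext e : y = x)) with hl | hl
    · exact Or.inr (Or.inr ⟨h.symm, hl⟩)
    · exact Or.inl (Or.inr ⟨h, hl⟩)
  · exact Or.inr (Or.inl h)

/-- rank of `x` on the cut line `m`. -/
def rk (m : ℤ) (x : Fin n) : ℕ := #(univ.filter fun y => LtR π m y x)

lemma rk_lt (m : ℤ) (x : Fin n) : rk π m x < n := by
  have hsub : (univ.filter fun y => LtR π m y x) ⊆ univ.erase x := by
    intro y hy
    rcases mem_filter.mp hy with ⟨_, hy⟩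
    refine mem_erase.mpr ⟨fun e => LtR_irrefl π m x (e ▸ hy), mem_univ _⟩
  calc rk π m x ≤ #(univ.erase x) := card_le_card hsub
    _ < n := by
      rw [card_erase_of_mem (mem_univ x), card_univ, Fintype.card_fin]
      have : 0 < n := x.pos
      omega

lemma rk_lt_of_LtR {m : ℤ} {y x : Fin n} (h : LtR π m y x) : rk π m y < rk π m x := by
  apply card_lt_card
  constructor
  · intro z hz
    exact mem_filter.mpr ⟨mem_univ _, LtR_trans π (mem_filter.mp hz).2 h⟩
  · intro hsub
    have := mem_filter.mp (hsub (mem_filter.mpr ⟨mem_univ y, h⟩))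
    exact LtR_irrefl π m y this.2

lemma rk_injective (m : ℤ) : Function.Injective (rk π m) := by
  intro y x he
  by_contra hne
  rcases LtR_total π (m := m) hne with h | h
  · exact absurd he (Nat.ne_of_lt (rk_lt_of_LtR π h))
  · exact absurd he.symm (Nat.ne_of_lt (rk_lt_of_LtR π h))

/-- the interpolating permutation at cut line `m`. -/
noncomputable def rho (m : ℤ) : Equiv.Perm (Fin n) :=
  Equiv.ofBijective (fun x => (⟨rk π m x, rk_lt π m x⟩ : Fin n))
    (Finite.injective_iff_bijective.mp (fun y x h => rk_injective π m (by
      simpa using congrArg Fin.val h)))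

@[simp] lemma rho_apply_val (m : ℤ) (x : Fin n) : ((rho π m x : Fin n) : ℕ) = rk π m x := rfl

/-! ### endpoints -/

lemma card_below (c : Fin n) : #(univ.filter fun y => π y < c) = (c : ℕ) := by
  rw [← Fin.card_Iio (b := c)]
  apply card_bij (fun y _ => π y)
  · intro a ha; exact mem_Iio.mpr (mem_filter.mp ha).2
  · intro a _ b _ h; exact π.injective h
  · intro b hb; exact ⟨π.symm b, mem_filter.mpr ⟨mem_univ _, by simpa using mem_Iio.mp hb⟩, by simp⟩

lemma hh_low (x : Fin n) : hh π (1 - (n : ℤ)) x = ((π x : ℕ) : ℤ) + ((n : ℤ) - 1) := by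
  unfold hh
  have hx : (x : ℕ) < n := x.2
  have h2 : (0:ℤ) ≤ ((π x : ℕ) : ℤ) := Int.ofNat_nonneg _
  rw [max_eq_right (by omega)]
  ring

lemma hh_high (x : Fin n) : hh π (n : ℤ) x = ((x : ℕ) : ℤ) := by
  unfold hh
  have hx : (π x : ℕ) < n := (π x).2
  exact max_eq_left (by omega)

lemma LtR_low_iff (y x : Fin n) : LtR π (1 - (n:ℤ)) y x ↔ π y < π x := by
  unfold LtR
  rw [hh_low, hh_low]
  constructor
  · rintro (h | ⟨e, l⟩)
    · rw [Fin.lt_def]; omega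
    · have : π y = π x := Fin.ext (by omega)
      exact absurd (π.injective this) l.ne'
  · intro h
    exact Or.inl (by rw [Fin.lt_def] at h; omega)

lemma LtR_high_iff (y x : Fin n) : LtR π ((n:ℤ)) y x ↔ y < x := by
  unfold LtR
  rw [hh_high, hh_high]
  constructor
  · rintro (h | ⟨e, l⟩)
    · rw [Fin.lt_def]; omega
    · have : y = x := Fin.ext (by omega)
      omega
  · intro h
    exact Or.inl (by rw [Fin.lt_def] at h; omega)

lemma rho_low : rho π (1 - (n : ℤ)) = π := by
  apply Equiv.ext
  intro x
  apply Fin.ext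
  rw [rho_apply_val]
  unfold rk
  rw [← card_below π (π x)]
  congr 1
  apply Finset.ext
  intro y
  simp only [mem_filter, mem_univ, true_and]
  exact LtR_low_iff π y x

lemma rho_high : rho π ((n : ℤ)) = 1 := by
  apply Equiv.ext
  intro x
  apply Fin.ext
  rw [rho_apply_val]
  unfold rk
  have e : (univ.filter fun y => LtR π (n:ℤ) y x) = Iio x := by
    apply Finset.ext
    intro y
    simp only [mem_filter, mem_univ, true_and, mem_Iio]
    exact LtR_high_iff π y x
  rw [e, Fin.card_Iio]
  rfl

/-! ### crossings -/

lemma crossing {m : ℤ} {i j : Fin n} (hij : i < j)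
    (hch : ((hh π m i < hh π m j) ∧ ¬(hh π (m+1) i < hh π (m+1) j)) ∨
           (¬(hh π m i < hh π m j) ∧ (hh π (m+1) i < hh π (m+1) j))) :
    ((π i : ℕ) : ℤ) = ((j : ℕ) : ℤ) + m ∧ π j < π i := by
  have hvij : ((i : ℕ) : ℤ) < ((j : ℕ) : ℤ) := by exact_mod_cast Fin.lt_def.mp hij
  have hpne : ((π i : ℕ) : ℤ) ≠ ((π j : ℕ) : ℤ) := by
    intro e
    exact absurd (π.injective (Fin.ext (by exact_mod_cast e))) hij.ne
  have key : ((π i : ℕ) : ℤ) = ((j : ℕ) : ℤ) + m ∧ ((π j : ℕ) : ℤ) < ((π i : ℕ) : ℤ) := by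
    unfold hh at hch
    rcases max_cases ((i:ℕ):ℤ) (((π i:ℕ):ℤ) - m) with ⟨e1,f1⟩|⟨e1,f1⟩ <;>
    rcases max_cases ((j:ℕ):ℤ) (((π j:ℕ):ℤ) - m) with ⟨e2,f2⟩|⟨e2,f2⟩ <;>
    rcases max_cases ((i:ℕ):ℤ) (((π i:ℕ):ℤ) - (m+1)) with ⟨e3,f3⟩|⟨e3,f3⟩ <;>
    rcases max_cases ((j:ℕ):ℤ) (((π j:ℕ):ℤ) - (m+1)) with ⟨e4,f4⟩|⟨e4,f4⟩ <;>
    rw [e1, e2, e3, e4] at hch <;> omega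
  exact ⟨key.1, Fin.lt_def.mpr (by exact_mod_cast key.2)⟩

def Chg (m : ℤ) (x y : Fin n) : Prop :=
  (LtR π m y x ∧ ¬ LtR π (m+1) y x) ∨ (¬ LtR π m y x ∧ LtR π (m+1) y x)

lemma chg_spec {m : ℤ} {x y : Fin n} (h : Chg π m x y) :
    (y < x ∧ ((π y : ℕ) : ℤ) = ((x : ℕ) : ℤ) + m ∧ π x < π y) ∨
    (x < y ∧ ((π x : ℕ) : ℤ) = ((y : ℕ) : ℤ) + m ∧ π y < π x) := by
  have hne : y ≠ x := by
    rintro rfl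
    rcases h with ⟨h1, _⟩ | ⟨_, h2⟩
    · exact LtR_irrefl π m y h1
    · exact LtR_irrefl π (m+1) y h2
  rcases lt_or_gt_of_ne hne with hlt | hgt
  · left
    refine ⟨hlt, crossing π hlt ?_⟩
    have conv : ∀ m', LtR π m' y x ↔ hh π m' y < hh π m' x := by
      intro m'
      constructor
      · rintro (h' | ⟨e, l⟩)
        · exact h'
        · exact absurd hlt l.asymm
      · exact Or.inl
    rcases h with ⟨h1, h2⟩ | ⟨h1, h2⟩
    · exact Or.inl ⟨(conv m).mp h1, fun c => h2 ((conv (m+1)).mpr c)⟩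
    · exact Or.inr ⟨fun c => h1 ((conv m).mpr c), (conv (m+1)).mp h2⟩
  · right
    refine ⟨hgt, crossing π hgt ?_⟩
    have conv : ∀ m', LtR π m' y x ↔ ¬ (hh π m' x < hh π m' y) := by
      intro m'
      constructor
      · rintro (h' | ⟨e, l⟩) c
        · omega
        · omega
      · intro c
        rcases lt_trichotomy (hh π m' y) (hh π m' x) with t | t | t
        · exact Or.inl t
        · exact Or.inr ⟨t, hgt⟩
        · exact absurd t c
    rcases h with ⟨h1, h2⟩ | ⟨h1, h2⟩
    · refine Or.inr ⟨(conv m).mp h1, ?_⟩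
      by_contra c
      exact h2 ((conv (m+1)).mpr c)
    · refine Or.inl ⟨?_, (conv (m+1)).mp h2⟩
      by_contra c
      exact h1 ((conv m).mpr c)

lemma chg_unique {m : ℤ} {x y z : Fin n} (hy : Chg π m x y) (hz : Chg π m x z) : y = z := by
  have hy' := chg_spec π hy
  have hz' := chg_spec π hz
  rcases hy' with ⟨l1, e1, p1⟩ | ⟨l1, e1, p1⟩ <;> rcases hz' with ⟨l2, e2, p2⟩ | ⟨l2, e2, p2⟩
  · exact π.injective (Fin.ext (by omega))
  · exfalso
    have v1 : ((π x : ℕ) : ℤ) < ((π y : ℕ) : ℤ) := by exact_mod_cast Fin.lt_def.mp p1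
    have v2 : ((x : ℕ) : ℤ) < ((z : ℕ) : ℤ) := by exact_mod_cast Fin.lt_def.mp l2
    omega
  · exfalso
    have v1 : ((π x : ℕ) : ℤ) < ((π z : ℕ) : ℤ) := by exact_mod_cast Fin.lt_def.mp p2
    have v2 : ((x : ℕ) : ℤ) < ((y : ℕ) : ℤ) := by exact_mod_cast Fin.lt_def.mp l1
    omega
  · exact Fin.ext (by omega)

lemma chg_of_left {m : ℤ} {x y : Fin n}
    (h1 : y ∈ univ.filter fun z => LtR π m z x)
    (h2 : y ∉ univ.filter fun z => LtR π (m+1) z x) : Chg π m x y :=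
  Or.inl ⟨(mem_filter.mp h1).2, fun c => h2 (mem_filter.mpr ⟨mem_univ _, c⟩)⟩

lemma chg_of_right {m : ℤ} {x y : Fin n}
    (h1 : y ∉ univ.filter fun z => LtR π m z x)
    (h2 : y ∈ univ.filter fun z => LtR π (m+1) z x) : Chg π m x y :=
  Or.inr ⟨fun c => h1 (mem_filter.mpr ⟨mem_univ _, c⟩), (mem_filter.mp h2).2⟩

lemma rk_step (m : ℤ) (x : Fin n) :
    rk π m x ≤ rk π (m+1) x + 1 ∧ rk π (m+1) x ≤ rk π m x + 1 := by
  set A := univ.filter fun z => LtR π m z x with hA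
  set B := univ.filter fun z => LtR π (m+1) z x with hB
  have hAB : #(A \ B) ≤ 1 := by
    rw [card_le_one]
    intro a ha b hb
    rcases mem_sdiff.mp ha with ⟨ha1, ha2⟩
    rcases mem_sdiff.mp hb with ⟨hb1, hb2⟩
    exact chg_unique π (chg_of_left π ha1 ha2) (chg_of_left π hb1 hb2)
  have hBA : #(B \ A) ≤ 1 := by
    rw [card_le_one]
    intro a ha b hb
    rcases mem_sdiff.mp ha with ⟨ha1, ha2⟩
    rcases mem_sdiff.mp hb with ⟨hb1, hb2⟩
    exact chg_unique π (chg_of_right π ha2 ha1) (chg_of_right π hb2 hb1)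
  have h1 : #A ≤ #(A \ B) + #B := card_le_card_sdiff_add_card
  have h2 : #B ≤ #(B \ A) + #A := card_le_card_sdiff_add_card
  exact ⟨by unfold rk; rw [← hA, ← hB]; omega, by unfold rk; rw [← hA, ← hB]; omega⟩

/-- if no crossing happens at diagonal `k`, ranks are unchanged -/
lemma rk_eq_of_no_cross {k : ℤ}
    (hk : ¬ ∃ i j : Fin n, i < j ∧ π j < π i ∧ ((π i : ℕ) : ℤ) - ((j : ℕ) : ℤ) = k)
    (x : Fin n) : rk π k x = rk π (k+1) x := by
  unfold rk
  congr 1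
  apply Finset.ext
  intro y
  simp only [mem_filter, mem_univ, true_and]
  constructor
  · intro h1
    by_contra h2
    rcases chg_spec π (Or.inl ⟨h1, h2⟩ : Chg π k x y) with ⟨l, e, p⟩ | ⟨l, e, p⟩
    · exact hk ⟨y, x, l, p, by omega⟩
    · exact hk ⟨x, y, l, p, by omega⟩
  · intro h2
    by_contra h1
    rcases chg_spec π (Or.inr ⟨h1, h2⟩ : Chg π k x y) with ⟨l, e, p⟩ | ⟨l, e, p⟩
    · exact hk ⟨y, x, l, p, by omega⟩
    · exact hk ⟨x, y, l, p, by omega⟩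

/-! ### the counting argument: every "anti-diagonal" crossing diagonal is a
"diagonal" inversion value -/

lemma S_subset_M {k : ℤ}
    (hS : ∃ i j : Fin n, i < j ∧ π j < π i ∧ ((π i : ℕ) : ℤ) - ((j : ℕ) : ℤ) = k) :
    ∃ i j : Fin n, i < j ∧ π j < π i ∧ ((π j : ℕ) : ℤ) - ((i : ℕ) : ℤ) = k := by
  by_contra hM
  push_neg at hM
  set X : Finset (Fin n) := univ.filter fun r => ((r : ℕ) : ℤ) + k < ((π r : ℕ) : ℤ) with hX
  set X' : Finset (Fin n) :=
    univ.filter fun c => ((π.symm c : ℕ) : ℤ) < ((c : ℕ) : ℤ) - k with hX'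
  set A : Finset (Fin n) := univ.filter fun r =>
    (((r : ℕ) : ℤ) + k < ((π r : ℕ) : ℤ) ∧ 0 ≤ ((r : ℕ) : ℤ) + k) with hA
  set B : Finset (Fin n) := univ.filter fun c =>
    (((π.symm c : ℕ) : ℤ) < ((c : ℕ) : ℤ) - k ∧ ((c : ℕ) : ℤ) - k < (n : ℤ)) with hB
  set B' : Finset (Fin n) := univ.filter fun r =>
    (∃ c : Fin n, ((c : ℕ) : ℤ) = ((r : ℕ) : ℤ) + k ∧ π.symm c < r) with hB'
  have h1 : #X = #X' := by
    apply card_bij (fun r _ => π r)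
    · intro a ha
      simp only [hX, hX', mem_filter, mem_univ, true_and, Equiv.symm_apply_apply] at ha ⊢
      omega
    · intro a _ b _ h
      exact π.injective h
    · intro c hc
      refine ⟨π.symm c, ?_, by simp⟩
      simp only [hX, hX', mem_filter, mem_univ, true_and, Equiv.apply_symm_apply] at hc ⊢
      omega
  have h2 : #A + #(univ.filter fun r : Fin n => ((r : ℕ) : ℤ) + k < 0) = #X := by
    have e1 : X.filter (fun r : Fin n => 0 ≤ ((r : ℕ) : ℤ) + k) = A := by
      ext r
      simp only [hX, hA, mem_filter, mem_univ, true_and]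
      try tauto
    have e2 : X.filter (fun r : Fin n => ¬ 0 ≤ ((r : ℕ) : ℤ) + k) =
        univ.filter fun r : Fin n => ((r : ℕ) : ℤ) + k < 0 := by
      ext r
      simp only [hX, mem_filter, mem_univ, true_and, not_le]
      have : (0:ℤ) ≤ ((π r : ℕ) : ℤ) := Int.ofNat_nonneg _
      constructor
      · intro h; exact h.2
      · intro h; exact ⟨by omega, h⟩
    rw [← e1, ← e2]
    exact card_filter_add_card_filter_not _
  have h3 : #B + #(univ.filter fun c : Fin n => (n : ℤ) ≤ ((c : ℕ) : ℤ) - k) = #X' := by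
    have e1 : X'.filter (fun c : Fin n => ((c : ℕ) : ℤ) - k < (n : ℤ)) = B := by
      ext c
      simp only [hX', hB, mem_filter, mem_univ, true_and]
      try tauto
    have e2 : X'.filter (fun c : Fin n => ¬ ((c : ℕ) : ℤ) - k < (n : ℤ)) =
        univ.filter fun c : Fin n => (n : ℤ) ≤ ((c : ℕ) : ℤ) - k := by
      ext c
      simp only [hX', mem_filter, mem_univ, true_and, not_lt]
      have : ((π.symm c : ℕ)) < n := (π.symm c).2
      constructor
      · intro h; exact h.2
      · intro h; exact ⟨by omega, h⟩
    rw [← e1, ← e2]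
    exact card_filter_add_card_filter_not _
  have h4 : #(univ.filter fun r : Fin n => ((r : ℕ) : ℤ) + k < 0)
      = #(univ.filter fun c : Fin n => (n : ℤ) ≤ ((c : ℕ) : ℤ) - k) := by
    apply card_bij (fun r _ => r.rev)
    · intro a ha
      simp only [mem_filter, mem_univ, true_and] at ha ⊢
      have h0 : (a.rev : ℕ) = n - (a + 1) := Fin.val_rev a
      have h5 : (a : ℕ) < n := a.2
      omega
    · intro a _ b _ h
      exact Fin.rev_injective h
    · intro c hc
      refine ⟨c.rev, ?_, Fin.rev_rev c⟩
      simp only [mem_filter, mem_univ, true_and] at hc ⊢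
      have h0 : (c.rev : ℕ) = n - (c + 1) := Fin.val_rev c
      have h5 : (c : ℕ) < n := c.2
      omega
  have h6 : #B = #B' := by
    have hmap : ∀ c ∈ B, ((((c : ℕ) : ℤ) - k).toNat) < n := by
      intro c hc
      simp only [hB, mem_filter, mem_univ, true_and] at hc
      omega
    apply card_bij (fun (c : Fin n) (hc : c ∈ B) =>
      (⟨(((c : ℕ) : ℤ) - k).toNat, hmap c hc⟩ : Fin n))
    · intro c hc
      simp only [hB, mem_filter, mem_univ, true_and] at hc
      simp only [hB', mem_filter, mem_univ, true_and]
      refine ⟨c, by simp; omega, ?_⟩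
      rw [Fin.lt_def]
      simp
      omega
    · intro a ha b hb h
      have := congrArg Fin.val h
      simp only at this
      simp only [hB, mem_filter, mem_univ, true_and] at ha hb
      apply Fin.ext
      omega
    · intro r hr
      simp only [hB', mem_filter, mem_univ, true_and] at hr
      obtain ⟨c, hc1, hc2⟩ := hr
      have hc2' : ((π.symm c : ℕ)) < ((r : ℕ)) := Fin.lt_def.mp hc2
      have hrn : (r : ℕ) < n := r.2
      refine ⟨c, ?_, ?_⟩
      · simp only [hB, mem_filter, mem_univ, true_and]
        omega
      · apply Fin.ext
        simp only
        omega
  have h7 : A ⊆ B' := by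
    intro r hr
    simp only [hA, mem_filter, mem_univ, true_and] at hr
    obtain ⟨hr1, hr2⟩ := hr
    have hπr : ((π r : ℕ)) < n := (π r).2
    set c : Fin n := ⟨(((r : ℕ) : ℤ) + k).toNat, by omega⟩ with hc
    have hcv : ((c : ℕ) : ℤ) = ((r : ℕ) : ℤ) + k := by
      simp only [hc]
      omega
    simp only [hB', mem_filter, mem_univ, true_and]
    refine ⟨c, hcv, ?_⟩
    rcases lt_trichotomy (π.symm c) r with h | h | h
    · exact h
    · exfalso
      have hc' : c = π r := by rw [← h, Equiv.apply_symm_apply]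
      have := congrArg Fin.val hc'
      omega
    · exfalso
      refine hM r (π.symm c) h ?_ ?_
      · rw [Fin.lt_def, Equiv.apply_symm_apply]
        omega
      · rw [Equiv.apply_symm_apply]
        omega
  have h8 : A = B' := eq_of_subset_of_card_le h7 (by omega)
  obtain ⟨i, j, hij, hpji, hk⟩ := hS
  have hjB' : j ∈ B' := by
    simp only [hB', mem_filter, mem_univ, true_and]
    refine ⟨π i, by omega, by rwa [Equiv.symm_apply_apply]⟩
  rw [← h8] at hjB'
  simp only [hA, mem_filter, mem_univ, true_and] at hjB'
  have : ((π j : ℕ)) < ((π i : ℕ)) := Fin.lt_def.mp hpji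
  omega

/-! ### the factors -/

noncomputable def sg (k : ℤ) : Equiv.Perm (Fin n) := rho π k * (rho π (k+1))⁻¹

lemma band (k : ℤ) (i : Fin n) :
    |((sg π k i : ℕ) : ℤ) - ((i : ℕ) : ℤ)| ≤ 1 := by
  set x := (rho π (k+1))⁻¹ i with hxdef
  have hx : rho π (k+1) x = i := Equiv.apply_symm_apply _ i
  have e1 : ((sg π k i : ℕ)) = rk π k x := by
    rw [show sg π k i = rho π k x from by rw [sg, Equiv.Perm.mul_apply, hxdef]]
    exact rho_apply_val π k x
  have e2 : ((i : ℕ)) = rk π (k+1) x := by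
    rw [← hx]
    exact (rho_apply_val π (k+1) x)
  have hstep := rk_step π k x
  rw [abs_le]
  omega

lemma sg_eq_one {k : ℤ}
    (hk : ¬ ∃ i j : Fin n, i < j ∧ π j < π i ∧ ((π j : ℕ) : ℤ) - ((i : ℕ) : ℤ) = k) :
    sg π k = 1 := by
  have hnc : ¬ ∃ i j : Fin n, i < j ∧ π j < π i ∧ ((π i : ℕ) : ℤ) - ((j : ℕ) : ℤ) = k :=
    fun hex => hk (S_subset_M π hex)
  have : rho π k = rho π (k+1) := by
    apply Equiv.ext
    intro x
    exact Fin.ext (rk_eq_of_no_cross π hnc x)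
  rw [sg, this]
  simp

lemma prod_sg (a : ℤ) (L : ℕ) :
    ((List.range L).map fun t : ℕ => sg π (a + (t : ℤ))).prod = rho π a * (rho π (a + L))⁻¹ := by
  induction L with
  | zero => simp
  | succ L ih =>
    rw [List.range_succ, List.map_append, List.prod_append, ih]
    simp only [List.map_cons, List.map_nil, List.prod_cons, List.prod_nil, mul_one]
    have hc : ((L + 1 : ℕ) : ℤ) = (L : ℤ) + 1 := by push_cast; ring
    rw [hc, sg]
    rw [show a + ((L : ℤ) + 1) = (a + L) + 1 from by ring]
    group

end DF


/-- `π = σ^{−n+1} ∘ σ^{−n+2} ∘ ⋯ ∘ σ^{n−1}` where each `σ^k` has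
bandwidth 1 and `σ^k = 1` whenever `k ∉ M = {π(j) − i : i < j, π(i) > π(j)}`.
The product over `k = −n+1, …, n−1` (in increasing order of `k`) is expressed as
the product of the list `[σ(−n+1), …, σ(n−1)]`. -/
theorem diagonal_factorization (n : ℕ) (π : Equiv.Perm (Fin n)) (M : Finset ℤ)
    (hM : M = Finset.image (fun p : Fin n × Fin n => ((π p.2 : ℕ) : ℤ) - ((p.1 : ℕ) : ℤ))
      (Finset.univ.filter fun p : Fin n × Fin n => p.1 < p.2 ∧ π p.2 < π p.1)) :
    ∃ σ : ℤ → Equiv.Perm (Fin n),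
      (∀ k : ℤ, ∀ i : Fin n, |(((σ k) i : ℕ) : ℤ) - ((i : ℕ) : ℤ)| ≤ 1) ∧
      (∀ k : ℤ, k ∉ M → σ k = 1) ∧
      π = ((List.range (2 * n - 1)).map fun t => σ ((t : ℤ) - ((n : ℤ) - 1))).prod := by
  rcases Nat.eq_zero_or_pos n with hn | hn
  · subst hn
    refine ⟨fun _ => 1, ?_, fun _ _ => rfl, ?_⟩
    · intro k i
      exact absurd i.2 (by omega)
    · have hπ : π = 1 := Equiv.ext fun x => x.elim0
      rw [hπ]
      simp
  · refine ⟨DF.sg π, DF.band π, ?_, ?_⟩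
    · intro k hk
      apply DF.sg_eq_one π
      rintro ⟨i, j, hij, hpji, he⟩
      apply hk
      rw [hM]
      exact Finset.mem_image.mpr ⟨(i, j),
        Finset.mem_filter.mpr ⟨Finset.mem_univ _, hij, hpji⟩, he⟩
    · simp only [bind_pure_comp, List.map_eq_map, List.map_map]
      have e : (fun t : ℤ => DF.sg π (t - ((n:ℤ) - 1))) ∘ (Nat.cast : ℕ → ℤ) =
          fun t : ℕ => DF.sg π ((1 - (n:ℤ)) + (t:ℤ)) := by
        funext t
        simp only [Function.comp_apply]
        congr 1
        ring
      rw [e, DF.prod_sg π (1 - (n : ℤ)) (2 * n - 1)]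
      have hcast : ((2 * n - 1 : ℕ) : ℤ) = 2 * (n : ℤ) - 1 := by
        omega
      rw [hcast]
      rw [show (1 - (n : ℤ)) + (2 * (n : ℤ) - 1) = (n : ℤ) from by ring]
      rw [DF.rho_low, DF.rho_high]
      simp
end

section
/- Let n ≥ 1, w ≥ 1, and let f : ℤ → ℤ be a bijection that is n-periodic (f(i + n) = f(i) + n for all i) and of bandwidth w (|f(i) − i| ≤ w for all i). Then there exist bijections σ¹, …, σ^{2w−1} of ℤ, each n-periodic, an involution, and of bandwidth 1, and an integer k with |k| ≤ w, such that f = σ¹ ∘ σ² ∘ ⋯ ∘ σ^{2w−1} ∘ Sᵏ, where S : ℤ → ℤ is the shift S(i) = i + 1. -/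
open Equiv

namespace StrangProof

/-- `i` is a (strict local) peak of `x`. -/
def IsPeak (x : Perm ℤ) (i : ℤ) : Prop := x (i - 1) < x i ∧ x (i + 1) < x i

instance (x : Perm ℤ) (i : ℤ) : Decidable (IsPeak x i) := by
  unfold IsPeak; infer_instance

lemma not_peak_succ {x : Perm ℤ} {i : ℤ} (h : IsPeak x i) : ¬ IsPeak x (i + 1) := by
  intro h2
  have b := h2.1
  rw [add_sub_cancel_right] at b
  exact lt_asymm h.2 b

/-- the layer function: peaks move right, their right neighbours move left. -/
def layerFun (x : Perm ℤ) (i : ℤ) : ℤ :=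
  if IsPeak x i then i + 1 else if IsPeak x (i - 1) then i - 1 else i

lemma layerFun_peak {x : Perm ℤ} {i : ℤ} (h : IsPeak x i) : layerFun x i = i + 1 :=
  if_pos h

lemma layerFun_after_peak {x : Perm ℤ} {i : ℤ} (h : IsPeak x (i - 1)) :
    layerFun x i = i - 1 := by
  unfold layerFun
  rw [if_neg, if_pos h]
  intro h2
  have b := h2.1
  exact lt_asymm h.2 (by simpa using b)

lemma layerFun_other {x : Perm ℤ} {i : ℤ} (h : ¬ IsPeak x i) (h2 : ¬ IsPeak x (i - 1)) :
    layerFun x i = i := by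
  unfold layerFun; rw [if_neg h, if_neg h2]

lemma layerFun_invol (x : Perm ℤ) (i : ℤ) : layerFun x (layerFun x i) = i := by
  by_cases h : IsPeak x i
  · rw [layerFun_peak h, layerFun_after_peak (by simpa using h)]
    ring
  · by_cases h2 : IsPeak x (i - 1)
    · rw [layerFun_after_peak h2, layerFun_peak h2, sub_add_cancel]
    · rw [layerFun_other h h2, layerFun_other h h2]

/-- The layer as a permutation. -/
def layer (x : Perm ℤ) : Perm ℤ :=
  ⟨layerFun x, layerFun x, layerFun_invol x, layerFun_invol x⟩

lemma layer_apply (x : Perm ℤ) (i : ℤ) : layer x i = layerFun x i := rfl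

lemma layer_sq (x : Perm ℤ) : layer x * layer x = 1 := by
  ext i; exact layerFun_invol x i

lemma layer_band (x : Perm ℤ) (i : ℤ) : |layer x i - i| ≤ 1 := by
  rw [layer_apply]; unfold layerFun
  split_ifs <;> simp

/-- one step of the sorting process. -/
def step (x : Perm ℤ) : Perm ℤ := x * layer x

lemma step_apply (x : Perm ℤ) (i : ℤ) : step x i = x (layerFun x i) := rfl

/-! ### periodicity -/

def Per (n : ℤ) (g : ℤ → ℤ) : Prop := ∀ i : ℤ, g (i + n) = g i + n

lemma isPeak_per {x : Perm ℤ} {n : ℤ} (hp : Per n x) (i : ℤ) :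
    IsPeak x (i + n) ↔ IsPeak x i := by
  unfold IsPeak
  have e1 : i + n - 1 = (i - 1) + n := by ring
  have e2 : i + n + 1 = (i + 1) + n := by ring
  rw [e1, e2, hp, hp, hp]
  omega

lemma layerFun_per {x : Perm ℤ} {n : ℤ} (hp : Per n x) : Per n (layerFun x) := by
  intro i
  unfold layerFun
  have e1 : i + n - 1 = (i - 1) + n := by rw [sub_add_eq_add_sub]
  rw [e1]
  simp only [isPeak_per hp]
  split_ifs <;> ring

lemma per_comp {n : ℤ} {g h : ℤ → ℤ} (hg : Per n g) (hh : Per n h) :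
    Per n (fun i => g (h i)) := by
  intro i; simp only []
  rw [hh i, hg (h i)]

lemma step_per {x : Perm ℤ} {n : ℤ} (hp : Per n x) : Per n (step x) := by
  intro i
  rw [step_apply, step_apply, layerFun_per hp, hp]

lemma per_inv {x : Perm ℤ} {n : ℤ} (hp : Per n x) : Per n (x.symm) := by
  intro i
  have h2 : x (x.symm i + n) = i + n := by rw [hp, Equiv.apply_symm_apply]
  calc x.symm (i + n) = x.symm (x (x.symm i + n)) := by rw [h2]
    _ = x.symm i + n := by rw [Equiv.symm_apply_apply]

lemma layerFun_inj (x : Perm ℤ) : Function.Injective (layerFun x) := by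
  intro a b h
  have ha := layerFun_invol x a
  rw [h, layerFun_invol] at ha
  exact ha.symm

lemma layerFun_le (x : Perm ℤ) (k : ℤ) : layerFun x k ≤ k + 1 := by
  unfold layerFun; split_ifs <;> omega

lemma layerFun_ge (x : Perm ℤ) (k : ℤ) : k - 1 ≤ layerFun x k := by
  unfold layerFun; split_ifs <;> omega

lemma card_le_noBonus (x : Perm ℤ) (S T : Finset ℤ)
    (hmap : ∀ k ∈ S, layerFun x k ∈ T) : S.card ≤ T.card :=
  Finset.card_le_card_of_injOn _ hmap ((layerFun_inj x).injOn)

lemma card_le_bonus (x : Perm ℤ) (S T : Finset ℤ) (p : ℤ) (hp : p ∈ T)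
    (hmap : ∀ k ∈ S, layerFun x k ∈ T.erase p) : S.card + 1 ≤ T.card := by
  have h1 : S.card ≤ (T.erase p).card :=
    Finset.card_le_card_of_injOn _ hmap ((layerFun_inj x).injOn)
  have h2 := Finset.card_erase_of_mem hp
  have h3 : 1 ≤ T.card := Finset.card_pos.2 ⟨p, hp⟩
  omega

/-- the potential of a crossing pair. -/
noncomputable def Fpot (x : Perm ℤ) (a b : ℤ) : ℤ :=
  (x a - x b) + ((Finset.Ioo a b).filter (fun k => x k < x a)).card

lemma erase_card_ge (N : Finset ℤ) (e : ℤ) : N.card ≤ (N.erase e).card + 1 := by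
  have h : N ⊆ insert e (N.erase e) := by
    intro k hk
    by_cases hke : k = e
    · simp [hke]
    · exact Finset.mem_insert_of_mem (Finset.mem_erase.2 ⟨hke, hk⟩)
  calc N.card ≤ (insert e (N.erase e)).card := Finset.card_le_card h
    _ ≤ (N.erase e).card + 1 := Finset.card_insert_le _ _



lemma eq_of_layerFun_eq {x : Equiv.Perm ℤ} {k c : ℤ} (h : layerFun x k = c) :
    k = layerFun x c := by
  rw [← h, layerFun_invol]

lemma main_step (x : Equiv.Perm ℤ) {i j : ℤ} (hij : i < j) (hcr : step x j < step x i) :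
    ∃ a b : ℤ, a < b ∧ x b < x a ∧ Fpot (step x) i j + 1 ≤ Fpot x a b := by
  classical
  have hyk : ∀ k, step x k = x (layerFun x k) := fun k => rfl
  set v := step x i with hv
  set u := step x j with hu
  -- right-end analysis
  have hright : ∃ b e : ℤ, j ≤ b ∧ b ≤ j + 1 ∧
      (∀ k, i < k → k < j → k ≠ e → layerFun x k < b) ∧
      ((e = i ∧ x b = u) ∨ (x b + 1 ≤ u ∧ e = j - 1)) := by
    by_cases hE : IsPeak x (j - 1)
    · have htj : layerFun x j = j - 1 := layerFun_after_peak hE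
      refine ⟨j, j - 1, le_refl _, by omega, ?_, Or.inr ⟨?_, rfl⟩⟩
      · intro k hk1 hk2 hke
        have h1 : layerFun x k ≤ j := by have := layerFun_le x k; omega
        rcases lt_or_eq_of_le h1 with h2 | h2
        · exact h2
        · exfalso
          have h3 := eq_of_layerFun_eq h2
          rw [htj] at h3
          exact hke h3
      · have hu1 : u = x (j - 1) := by rw [hu, hyk j, htj]
        have h2 := hE.2
        rw [sub_add_cancel] at h2
        omega
    · by_cases hG : IsPeak x j
      · have htj : layerFun x j = j + 1 := layerFun_peak hG
        refine ⟨j + 1, i, by omega, le_refl _, ?_, Or.inl ⟨rfl, ?_⟩⟩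
        · intro k hk1 hk2 _
          have := layerFun_le x k; omega
        · rw [hu, hyk j, htj]
      · have htj : layerFun x j = j := layerFun_other hG hE
        refine ⟨j, i, le_refl _, by omega, ?_, Or.inl ⟨rfl, ?_⟩⟩
        · intro k hk1 hk2 _
          have h1 : layerFun x k ≤ j := by have := layerFun_le x k; omega
          rcases lt_or_eq_of_le h1 with h2 | h2
          · exact h2
          · exfalso
            have h3 := eq_of_layerFun_eq h2
            rw [htj] at h3
            omega
        · rw [hu, hyk j, htj]
  obtain ⟨b, e, hjb, hbj1, hmapR, hcaseR⟩ := hright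
  have hxb_le_u : x b ≤ u := by
    rcases hcaseR with ⟨_, h⟩ | ⟨h, _⟩ <;> omega
  have huv : u < v := hcr
  -- left-end analysis
  have hleft : ∃ a : ℤ, i - 1 ≤ a ∧ a < b ∧ v ≤ x a ∧
      (∀ k, i < k → k < j → step x k < v → a < layerFun x k) ∧
      ((∃ p, a < p ∧ p < b ∧ x p < x a ∧ (∀ k, i < k → k < j → layerFun x k ≠ p)) ∨
        (v + 1 ≤ x a)) := by
    by_cases hA : IsPeak x (i - 1)
    · -- case A : v was a peak and moved right
      have hti : layerFun x i = i - 1 := layerFun_after_peak hA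
      have hvx : v = x (i - 1) := by rw [hv, hyk i, hti]
      have hxi : x i < x (i - 1) := by
        have h2 := hA.2; rw [sub_add_cancel] at h2; exact h2
      refine ⟨i - 1, le_refl _, by omega, le_of_eq hvx, ?_,
        Or.inl ⟨i, by omega, by omega, hxi, ?_⟩⟩
      · intro k hk1 hk2 _
        have := layerFun_ge x k; omega
      · intro k hk1 hk2 hkp
        have h3 := eq_of_layerFun_eq hkp
        rw [hti] at h3; omega
    · by_cases hD : IsPeak x i
      · -- case D : v moved left past the peak at i
        have hti : layerFun x i = i + 1 := layerFun_peak hD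
        have hvx : v = x (i + 1) := by rw [hv, hyk i, hti]
        have hQ : v < x i := by rw [hvx]; exact hD.2
        have hti1 : layerFun x (i + 1) = i := by
          have h4 := layerFun_after_peak (x := x) (i := i + 1) (by simpa using hD)
          simpa using h4
        have hib : i + 1 < b := by
          by_contra hc
          have hb : b = i + 1 := by omega
          have h5 : x b = v := by rw [hb, ← hvx]
          omega
        refine ⟨i, by omega, by omega, le_of_lt hQ, ?_,
          Or.inl ⟨i + 1, by omega, hib, by rw [← hvx]; exact hQ, ?_⟩⟩
        · intro k hk1 hk2 hyk2
          have h1 : i ≤ layerFun x k := by have := layerFun_ge x k; omega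
          rcases lt_or_eq_of_le h1 with h3 | h3
          · exact h3
          · exfalso
            have hk3 := eq_of_layerFun_eq h3.symm
            rw [hti] at hk3
            have hs : step x k = x i := by rw [hyk k, hk3, hti1]
            omega
        · intro k hk1 hk2 hkp
          have h3 := eq_of_layerFun_eq hkp
          rw [hti1] at h3; omega
      · -- cases B / C : v did not move
        have hti : layerFun x i = i := layerFun_other hD hA
        have hvx : v = x i := by rw [hv, hyk i, hti]
        by_cases hB : x i < x (i + 1)
        · -- case B
          have hxa : v + 1 ≤ x (i + 1) := by omega
          have hib : i + 1 < b := by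
            by_contra hc
            have hb : b = i + 1 := by omega
            have h5 : x b = x (i + 1) := by rw [hb]
            omega
          refine ⟨i + 1, by omega, hib, by omega, ?_, Or.inr hxa⟩
          intro k hk1 hk2 hyk2
          have h1 : i ≤ layerFun x k := by have := layerFun_ge x k; omega
          have h2 : layerFun x k ≠ i := by
            intro hc
            have h3 := eq_of_layerFun_eq hc
            rw [hti] at h3; omega
          have h3 : layerFun x k ≠ i + 1 := by
            intro hc
            have hk3 := eq_of_layerFun_eq hc
            by_cases hP : IsPeak x (i + 1)
            · have h6 : layerFun x (i + 1) = i + 2 := by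
                have := layerFun_peak hP
                omega
              rw [h6] at hk3
              have ht2 : layerFun x (i + 2) = i + 1 := by
                have h7 := layerFun_after_peak (x := x) (i := i + 2)
                  (by rw [show i + 2 - 1 = i + 1 by ring]; exact hP)
                omega
              have hs : step x k = x (i + 1) := by rw [hyk k, hk3, ht2]
              omega
            · have h6 : layerFun x (i + 1) = i + 1 := by
                apply layerFun_other hP
                simpa using hD
              rw [h6] at hk3
              have hs : step x k = x (i + 1) := by rw [hyk k, hk3, h6]
              omega
          omega
        · -- case C
          have hne : x (i + 1) ≠ x i := fun hc => by
            have := x.injective hc; omega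
          have hlt : x (i + 1) < x i := by omega
          have hgt : x i < x (i - 1) := by
            by_contra hc
            have hne2 : x (i - 1) ≠ x i := fun h2 => by
              have := x.injective h2; omega
            exact hD ⟨by omega, hlt⟩
          refine ⟨i - 1, le_refl _, by omega, by omega, ?_,
            Or.inl ⟨i, by omega, by omega, by omega, ?_⟩⟩
          · intro k hk1 hk2 _
            have := layerFun_ge x k; omega
          · intro k hk1 hk2 hkp
            have h3 := eq_of_layerFun_eq hkp
            rw [hti] at h3; omega
  obtain ⟨a, hia, hab, hva, hmapL, hbonus⟩ := hleft
  -- counting part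
  set N := (Finset.Ioo i j).filter (fun k => step x k < v) with hNdef
  set S := N.erase e with hSdef
  set T := (Finset.Ioo a b).filter (fun k => x k < x a) with hTdef
  have hmapS : ∀ k ∈ S, layerFun x k ∈ T := by
    intro k hk
    obtain ⟨hke, hkN⟩ := Finset.mem_erase.1 hk
    rw [hNdef] at hkN
    obtain ⟨hkIoo, hky⟩ := Finset.mem_filter.1 hkN
    obtain ⟨hik, hkj⟩ := Finset.mem_Ioo.1 hkIoo
    refine Finset.mem_filter.2 ⟨Finset.mem_Ioo.2 ⟨hmapL k hik hkj hky, hmapR k hik hkj hke⟩, ?_⟩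
    have h8 : x (layerFun x k) = step x k := (hyk k).symm
    omega
  have hFy : Fpot (step x) i j = (v - u) + (N.card : ℤ) := by
    rw [Fpot, ← hv, ← hu, ← hNdef]
  have hFx : Fpot x a b = (x a - x b) + (T.card : ℤ) := by
    rw [Fpot, ← hTdef]
  refine ⟨a, b, hab, by omega, ?_⟩
  rw [hFy, hFx]
  have hNS : N.card ≤ S.card + 1 := by rw [hSdef]; exact erase_card_ge N e
  have hSTcard : S.card + (if heq : True then 0 else 0) ≤ T.card := by
    exact card_le_noBonus x S T hmapS
  rcases hbonus with ⟨p, hap, hpb, hxp, hpnot⟩ | hva1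
  · -- bonus point available
    have hpT : p ∈ T := by
      rw [hTdef]
      exact Finset.mem_filter.2 ⟨Finset.mem_Ioo.2 ⟨hap, hpb⟩, hxp⟩
    have hmapS' : ∀ k ∈ S, layerFun x k ∈ T.erase p := by
      intro k hk
      obtain ⟨hke, hkN⟩ := Finset.mem_erase.1 hk
      rw [hNdef] at hkN
      obtain ⟨hkIoo, hky⟩ := Finset.mem_filter.1 hkN
      obtain ⟨hik, hkj⟩ := Finset.mem_Ioo.1 hkIoo
      exact Finset.mem_erase.2 ⟨hpnot k hik hkj, hmapS k hk⟩
    have hST : S.card + 1 ≤ T.card := card_le_bonus x S T p hpT hmapS'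
    rcases hcaseR with ⟨hei, hxbu⟩ | ⟨hxbu, hej⟩
    · -- e = i, no loss
      have hiN : i ∉ N := by
        rw [hNdef]
        intro hc
        have := (Finset.mem_Ioo.1 (Finset.mem_filter.1 hc).1).1
        omega
      have hSN : S = N := by rw [hSdef, hei]; exact Finset.erase_eq_of_notMem hiN
      rw [hSN] at hST
      omega
    · omega
  · -- value margin
    have hST : S.card ≤ T.card := card_le_noBonus x S T hmapS
    rcases hcaseR with ⟨hei, hxbu⟩ | ⟨hxbu, hej⟩
    · have hiN : i ∉ N := by
        rw [hNdef]
        intro hc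
        have := (Finset.mem_Ioo.1 (Finset.mem_filter.1 hc).1).1
        omega
      have hSN : S = N := by rw [hSdef, hei]; exact Finset.erase_eq_of_notMem hiN
      rw [hSN] at hST
      omega
    · omega

/-! ### the iteration -/

def iter (f : Equiv.Perm ℤ) : ℕ → Equiv.Perm ℤ
  | 0 => f
  | t + 1 => step (iter f t)

lemma iter_bound (f : Equiv.Perm ℤ) (M : ℤ)
    (h0 : ∀ i j : ℤ, i < j → f j < f i → Fpot f i j ≤ M) :
    ∀ t : ℕ, ∀ i j : ℤ, i < j → iter f t j < iter f t i → Fpot (iter f t) i j ≤ M - t := by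
  intro t
  induction t with
  | zero => simpa [iter] using h0
  | succ t ih =>
    intro i j hij hcr
    obtain ⟨a, b, hab, hxba, hF⟩ := main_step (iter f t) hij hcr
    have h2 := ih a b hab hxba
    push_cast
    have : Fpot (step (iter f t)) i j + 1 ≤ M - t := le_trans hF h2
    have he : iter f (t + 1) = step (iter f t) := rfl
    rw [he]
    omega

lemma Fpot_pos (x : Equiv.Perm ℤ) {i j : ℤ} (hij : i < j) (hcr : x j < x i) :
    1 ≤ Fpot x i j := by
  rw [Fpot]
  have : (0:ℤ) ≤ ((Finset.Ioo i j).filter (fun k => x k < x i)).card := Int.natCast_nonneg _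
  omega

/-- after enough steps the permutation has no descents at all. -/
lemma iter_sorted (f : Equiv.Perm ℤ) (M : ℕ)
    (h0 : ∀ i j : ℤ, i < j → f j < f i → Fpot f i j ≤ (M:ℤ)) :
    ∀ i j : ℤ, i < j → iter f M i < iter f M j := by
  intro i j hij
  rcases lt_or_eq_of_le (le_of_not_gt (fun hcr : iter f M j < iter f M i => by
    have h1 := iter_bound f M h0 M i j hij hcr
    have h2 := Fpot_pos (iter f M) hij hcr
    omega)) with h | h
  · exact h
  · exact absurd ((iter f M).injective h) (by omega)

/-! ### strictly monotone permutations of ℤ are shifts -/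

lemma mono_eq_shift (x : Equiv.Perm ℤ) (hmono : ∀ i j : ℤ, i < j → x i < x j) :
    ∀ i : ℤ, x i = i + x 0 := by
  have hstep : ∀ i : ℤ, x (i + 1) = x i + 1 := by
    intro i
    have h1 : x i < x (i + 1) := hmono i (i + 1) (by omega)
    by_contra hc
    have h2 : x i + 2 ≤ x (i + 1) := by omega
    set m := x.symm (x i + 1) with hm
    have hxm : x m = x i + 1 := x.apply_symm_apply _
    rcases lt_trichotomy m i with h | h | h
    · have := hmono m i h; omega
    · rw [h] at hxm; omega
    · rcases lt_or_eq_of_le (by omega : i + 1 ≤ m) with h4 | h4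
      · have := hmono (i + 1) m h4; omega
      · rw [← h4] at hxm; omega
  intro i
  induction i using Int.induction_on with
  | zero => omega
  | succ k ih => have := hstep k; omega
  | pred k ih =>
      have h5 := hstep (-(k : ℤ) - 1)
      have h6 : -(k : ℤ) - 1 + 1 = -(k : ℤ) := by ring
      rw [h6] at h5
      omega

lemma addRight_zpow (k : ℤ) : (Equiv.addRight (1 : ℤ)) ^ k = Equiv.addRight k := by
  induction k using Int.induction_on with
  | zero => ext i; simp
  | succ k ih =>
      rw [zpow_add_one, ih]
      ext i
      simp [Equiv.Perm.mul_apply]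
      omega
  | pred k ih =>
      rw [zpow_sub_one, ih]
      ext i
      simp [Equiv.Perm.mul_apply]
      omega

/-! ### periodic sums -/

def PerF (n : ℤ) (F : ℤ → ℤ) : Prop := ∀ i : ℤ, F (i + n) = F i

lemma perF_shift {n : ℤ} {F : ℤ → ℤ} (hF : PerF n F) :
    ∀ (t : ℤ) (a : ℤ), F (a + n * t) = F a := by
  intro t
  induction t using Int.induction_on with
  | zero => intro a; simp
  | succ k ih =>
      intro a
      have h1 : a + n * ((k : ℤ) + 1) = (a + n * k) + n := by ring
      rw [h1, hF, ih]
  | pred k ih =>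
      intro a
      have h1 := hF (a + n * (-(k : ℤ) - 1))
      have h2 : a + n * (-(k : ℤ) - 1) + n = a + n * (-(k : ℤ)) := by ring
      rw [h2] at h1
      rw [← h1]
      exact ih a

lemma per_shift {n : ℤ} {g : ℤ → ℤ} (hg : Per n g) :
    ∀ (t : ℤ) (a : ℤ), g (a + n * t) = g a + n * t := by
  intro t
  induction t using Int.induction_on with
  | zero => intro a; simp
  | succ k ih =>
      intro a
      have h1 : a + n * ((k : ℤ) + 1) = (a + n * k) + n := by ring
      rw [h1, hg, ih]; ring
  | pred k ih =>
      intro a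
      have h1 := hg (a + n * (-(k : ℤ) - 1))
      have h2 : a + n * (-(k : ℤ) - 1) + n = a + n * (-(k : ℤ)) := by ring
      rw [h2] at h1
      have h3 := ih a
      omega

lemma perF_emod {n : ℤ} (hn : 0 < n) {F : ℤ → ℤ} (hF : PerF n F) (a : ℤ) :
    F (a % n) = F a := by
  have h1 : a % n = a + n * (-(a / n)) := by
    have h2 := Int.mul_ediv_add_emod a n
    ring_nf
    omega
  rw [h1, perF_shift hF]

lemma reindex_sum (n : ℕ) (hn : 0 < n) (τ : Equiv.Perm ℤ) (hτ : Per n τ)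
    (F : ℤ → ℤ) (hF : PerF n F) :
    ∑ r ∈ Finset.range n, F (τ r) = ∑ r ∈ Finset.range n, F r := by
  have hnz : (n : ℤ) ≠ 0 := by positivity
  have hnpos : (0:ℤ) < n := by positivity
  refine Finset.sum_nbij' (fun r => ((τ r) % n).toNat)
    (fun r => ((τ.symm r) % n).toNat) ?_ ?_ ?_ ?_ ?_
  · intro r hr
    rw [Finset.mem_range]
    have h1 := Int.emod_nonneg (τ r) hnz
    have h2 := Int.emod_lt_of_pos (τ r) hnpos
    omega
  · intro r hr
    rw [Finset.mem_range]
    have h1 := Int.emod_nonneg (τ.symm r) hnz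
    have h2 := Int.emod_lt_of_pos (τ.symm r) hnpos
    omega
  · intro r hr
    rw [Finset.mem_range] at hr
    have h1 := Int.emod_nonneg (τ r) hnz
    have h2 : ((((τ r) % n).toNat : ℤ)) = (τ r) % n := Int.toNat_of_nonneg h1
    have h3 : (τ r) % n = τ r + n * (-(τ r / n)) := by
      have h7 := Int.mul_ediv_add_emod (τ r) n
      have h8 : (n:ℤ) * (-(τ r / n)) = -(n * (τ r / n)) := by ring
      omega
    have h4 : τ.symm ((τ r) % n) = r + n * (-(τ r / n)) := by
      rw [h3, per_shift (per_inv hτ), Equiv.symm_apply_apply]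
    have h5 : ((r:ℤ) + n * (-(τ r / n))) % n = (r : ℤ) := by
      rw [Int.add_mul_emod_self_left, Int.emod_eq_of_lt (by omega) (by omega)]
    rw [h2, h4, h5]
    omega
  · intro r hr
    rw [Finset.mem_range] at hr
    have h1 := Int.emod_nonneg (τ.symm r) hnz
    have h2 : ((((τ.symm r) % n).toNat : ℤ)) = (τ.symm r) % n := Int.toNat_of_nonneg h1
    have h3 : (τ.symm r) % n = τ.symm r + n * (-(τ.symm r / n)) := by
      have h7 := Int.mul_ediv_add_emod (τ.symm r) n
      have h8 : (n:ℤ) * (-(τ.symm r / n)) = -(n * (τ.symm r / n)) := by ring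
      omega
    have h4 : τ ((τ.symm r) % n) = r + n * (-(τ.symm r / n)) := by
      rw [h3, per_shift hτ, Equiv.apply_symm_apply]
    have h5 : ((r : ℤ) + n * (-(τ.symm r / n))) % n = (r : ℤ) := by
      rw [Int.add_mul_emod_self_left, Int.emod_eq_of_lt (by omega) (by omega)]
    rw [h2, h4, h5]
    omega
  · intro r hr
    have h1 := Int.emod_nonneg (τ r) hnz
    have h2 : ((((τ r) % n).toNat : ℤ)) = (τ r) % n := Int.toNat_of_nonneg h1
    rw [h2, perF_emod hnpos hF]

def perSum (n : ℕ) (g : ℤ → ℤ) : ℤ := ∑ r ∈ Finset.range n, (g r - r)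

lemma perSum_comp (n : ℕ) (hn : 0 < n) (g τ : Equiv.Perm ℤ)
    (hg : Per n g) (hτ : Per n τ) :
    perSum n (fun i => g (τ i)) = perSum n g + perSum n τ := by
  have hF : PerF n (fun i => g i - i) := by
    intro i
    have := hg i
    simp only []
    omega
  have h1 : ∀ r : ℕ, g (τ r) - r = (fun i => g i - i) (τ r) + (τ r - r) := by
    intro r; simp only []; ring
  unfold perSum
  calc ∑ r ∈ Finset.range n, (g (τ r) - r)
      = ∑ r ∈ Finset.range n, ((fun i => g i - i) (τ r) + (τ r - r)) := by
        exact Finset.sum_congr rfl (fun r _ => h1 r)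
    _ = (∑ r ∈ Finset.range n, (fun i => g i - i) (τ r)) +
        (∑ r ∈ Finset.range n, (τ r - r)) := Finset.sum_add_distrib
    _ = (∑ r ∈ Finset.range n, (g r - r)) + (∑ r ∈ Finset.range n, (τ r - r)) := by
        rw [reindex_sum n hn τ hτ _ hF]

lemma perSum_invol_zero (n : ℕ) (hn : 0 < n) (τ : Equiv.Perm ℤ)
    (hτ : Per n τ) (hsq : τ * τ = 1) :
    perSum n τ = 0 := by
  have h1 := perSum_comp n hn τ τ hτ hτ
  have h2 : (fun i => τ (τ i)) = fun i : ℤ => i := by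
    funext i
    have := Equiv.ext_iff.1 hsq i
    simpa using this
  rw [h2] at h1
  have h3 : perSum n (fun i : ℤ => i) = 0 := by
    unfold perSum
    simp
  omega

lemma perSum_step (n : ℕ) (hn : 0 < n) (x : Equiv.Perm ℤ) (hx : Per n x) :
    perSum n (step x) = perSum n x := by
  have h1 : Per n (layer x) := fun i => layerFun_per hx i
  have h2 : perSum n (step x) = perSum n x + perSum n (layer x) :=
    perSum_comp n hn x (layer x) hx h1
  rw [h2, perSum_invol_zero n hn (layer x) h1 (layer_sq x)]
  ring

lemma iter_per (f : Equiv.Perm ℤ) (n : ℤ) (hf : Per n f) (t : ℕ) : Per n (iter f t) := by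
  induction t with
  | zero => exact hf
  | succ t ih => exact step_per ih

lemma perSum_iter (n : ℕ) (hn : 0 < n) (f : Equiv.Perm ℤ) (hf : Per n f) (t : ℕ) :
    perSum n (iter f t) = perSum n f := by
  induction t with
  | zero => rfl
  | succ t ih => rw [show iter f (t+1) = step (iter f t) from rfl,
      perSum_step n hn _ (iter_per f n hf t), ih]

/-! ### assembling the factorisation -/

lemma iter_prod (f : Equiv.Perm ℤ) :
    ∀ t : ℕ, f = iter f t * (List.ofFn (fun s : Fin t => layer (iter f (t - 1 - (s : ℕ))))).prod := by
  intro t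
  induction t with
  | zero => simp only [List.ofFn_zero, List.prod_nil, mul_one]; rfl
  | succ t ih =>
    have h1 : (List.ofFn (fun s : Fin (t+1) => layer (iter f (t + 1 - 1 - (s : ℕ)))))
        = layer (iter f t) :: List.ofFn (fun s : Fin t => layer (iter f (t - 1 - (s : ℕ)))) := by
      rw [List.ofFn_succ]
      have e0 : t + 1 - 1 - ((0 : Fin (t+1)) : ℕ) = t := by
        have h0 : ((0 : Fin (t+1)) : ℕ) = 0 := rfl
        omega
      have e1 : ∀ s : Fin t, t + 1 - 1 - ((s.succ : Fin (t+1)) : ℕ) = t - 1 - (s : ℕ) := by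
        intro s
        have h3 : ((s.succ : Fin (t+1)) : ℕ) = (s : ℕ) + 1 := rfl
        omega
      simp only [e0, e1]
    rw [h1, List.prod_cons]
    have h2 : iter f (t + 1) = iter f t * layer (iter f t) := rfl
    rw [h2]
    calc f = iter f t * (List.ofFn (fun s : Fin t => layer (iter f (t - 1 - (s : ℕ))))).prod := ih
      _ = iter f t * ((layer (iter f t) * layer (iter f t)) *
            (List.ofFn (fun s : Fin t => layer (iter f (t - 1 - (s : ℕ))))).prod) := by
          rw [layer_sq]; group
      _ = iter f t * layer (iter f t) *
            (layer (iter f t) *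
              (List.ofFn (fun s : Fin t => layer (iter f (t - 1 - (s : ℕ))))).prod) := by
          group

lemma conj_prod (A : Equiv.Perm ℤ) (l : List (Equiv.Perm ℤ)) :
    (l.map (fun z => A * z * A⁻¹)).prod = A * l.prod * A⁻¹ := by
  induction l with
  | nil => simp
  | cons a l ih =>
      simp only [List.map_cons, List.prod_cons, ih]
      group

lemma conj_sq (A L : Equiv.Perm ℤ) (h : L * L = 1) :
    (A * L * A⁻¹) * (A * L * A⁻¹) = 1 := by
  have h1 : (A * L * A⁻¹) * (A * L * A⁻¹) = A * (L * L) * A⁻¹ := by group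
  rw [h1, h]
  group

end StrangProof

open StrangProof in
/-- an `n`-periodic bijection of `ℤ` of bandwidth `w` factors as
`σ¹ ∘ ⋯ ∘ σ^{2w−1} ∘ Sᵏ` with each `σʲ` an `n`-periodic involution of
bandwidth 1 and `|k| ≤ w`, where `S(i) = i + 1`. -/
theorem periodic_strang (n w : ℕ) (hn : 1 ≤ n) (hw : 1 ≤ w) (f : Equiv.Perm ℤ)
    (hper : ∀ i : ℤ, f (i + n) = f i + n)
    (hband : ∀ i : ℤ, |f i - i| ≤ (w : ℤ)) :
    ∃ (σ : Fin (2 * w - 1) → Equiv.Perm ℤ) (k : ℤ),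
      (∀ j, (∀ i : ℤ, (σ j) (i + n) = (σ j) i + n) ∧
        σ j * σ j = 1 ∧ (∀ i : ℤ, |(σ j) i - i| ≤ 1)) ∧
      |k| ≤ (w : ℤ) ∧
      f = (List.ofFn σ).prod * (Equiv.addRight (1 : ℤ)) ^ k := by
  classical
  set M := 2 * w - 1 with hMdef
  have hfper : Per (n : ℤ) f := hper
  have h0 : ∀ i j : ℤ, i < j → f j < f i → Fpot f i j ≤ (M : ℤ) := by
    intro i j hij hcr
    rw [Fpot]
    have h1 : ((Finset.Ioo i j).filter (fun k => f k < f i)).card ≤ (Finset.Ioo i j).card :=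
      Finset.card_filter_le _ _
    have h2 : (Finset.Ioo i j).card = (j - i - 1).toNat := Int.card_Ioo i j
    have h3 := hband i
    have h4 := hband j
    rw [abs_le] at h3 h4
    omega
  have hsorted := iter_sorted f M h0
  set k := iter f M 0 with hk
  have hshift : ∀ i : ℤ, iter f M i = i + k := mono_eq_shift (iter f M) hsorted
  have hnpos : 0 < n := hn
  have hps1 : perSum n (iter f M) = perSum n f := perSum_iter n hnpos f hfper M
  have hps2 : perSum n (iter f M) = (n : ℤ) * k := by
    unfold perSum
    calc ∑ r ∈ Finset.range n, (iter f M r - r) = ∑ r ∈ Finset.range n, k :=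
          Finset.sum_congr rfl (fun r _ => by rw [hshift r]; ring)
      _ = (n : ℤ) * k := by
          rw [Finset.sum_const, Finset.card_range, nsmul_eq_mul]
  have habs : |perSum n f| ≤ (n : ℤ) * w := by
    calc |perSum n f| ≤ ∑ r ∈ Finset.range n, |f r - r| := Finset.abs_sum_le_sum_abs _ _
      _ ≤ ∑ r ∈ Finset.range n, (w : ℤ) := Finset.sum_le_sum (fun r _ => hband r)
      _ = (n : ℤ) * w := by rw [Finset.sum_const, Finset.card_range, nsmul_eq_mul]
  have hkw : |k| ≤ (w : ℤ) := by
    have h6 : (n : ℤ) * k = perSum n f := by rw [← hps2, hps1]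
    have h7 : |(n : ℤ) * k| ≤ (n : ℤ) * w := by rw [h6]; exact habs
    have h8 : |(n : ℤ) * k| = (n : ℤ) * |k| := by
      rw [abs_mul, abs_of_nonneg (show (0:ℤ) ≤ n by positivity)]
    have hn' : (0 : ℤ) < n := by positivity
    exact le_of_mul_le_mul_left (h8 ▸ h7) hn'
  set A := (Equiv.addRight (1 : ℤ)) ^ k with hA
  have hAeq : A = Equiv.addRight k := addRight_zpow k
  have hAap : ∀ i : ℤ, A i = i + k := by intro i; rw [hAeq]; rfl
  have hAinv : ∀ i : ℤ, A⁻¹ i = i - k := by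
    intro i
    have h9 : A (i - k) = i := by rw [hAap]; ring
    calc A⁻¹ i = A⁻¹ (A (i - k)) := by rw [h9]
      _ = i - k := by simp
  set σ : Fin M → Equiv.Perm ℤ :=
    fun s => A * layer (iter f (M - 1 - (s : ℕ))) * A⁻¹ with hσ
  have happly : ∀ (s : Fin M) (i : ℤ),
      σ s i = layer (iter f (M - 1 - (s : ℕ))) (i - k) + k := by
    intro s i
    rw [hσ]
    dsimp only
    rw [Equiv.Perm.mul_apply, Equiv.Perm.mul_apply, hAinv, hAap]
  refine ⟨σ, k, ?_, hkw, ?_⟩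
  · intro s
    have hLper : Per (n : ℤ) (layer (iter f (M - 1 - (s : ℕ)))) :=
      fun i => layerFun_per (iter_per f n hfper _) i
    refine ⟨?_, conj_sq A _ (layer_sq _), ?_⟩
    · intro i
      rw [happly, happly]
      have h10 := hLper (i - k)
      have h11 : i + (n : ℤ) - k = (i - k) + n := by ring
      rw [h11, h10]
      ring
    · intro i
      have h12 := layer_band (iter f (M - 1 - (s : ℕ))) (i - k)
      have h13 : σ s i - i = layer (iter f (M - 1 - (s : ℕ))) (i - k) - (i - k) := by
        rw [happly]; ring
      rw [h13]
      exact h12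
  · have hProd := iter_prod f M
    have hiterA : iter f M = A := by
      apply Equiv.ext
      intro i
      rw [hshift i, hAap i]
    set P := (List.ofFn (fun s : Fin M => layer (iter f (M - 1 - (s : ℕ))))).prod with hP
    have hofn : List.ofFn σ =
        (List.ofFn (fun s : Fin M => layer (iter f (M - 1 - (s : ℕ))))).map
          (fun z => A * z * A⁻¹) := by
      rw [List.map_ofFn]
      rfl
    have hσprod : (List.ofFn σ).prod = A * P * A⁻¹ := by
      rw [hofn, hP, conj_prod]
    rw [hσprod]
    have h14 : A * P * A⁻¹ * A = A * P := by group
    rw [h14, ← hiterA]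
    exact hProd
end

section
/- Let n ≥ 1, w ≥ 0, and let f : ℤ → ℤ be an n-periodic bijection of bandwidth w, i.e., |f(i) − i| ≤ w for all i. Then its shifting index satisfies |si(f)| ≤ w, where si(f) = #{i : 1 ≤ i ≤ n, f(i) ≥ n+1} − #{i : n+1 ≤ i ≤ 2n, f(i) ≤ n}. -/
/-- The shifting index of an `n`-periodic bijection `f : ℤ → ℤ`:
`#{i ∈ {1,…,n} : f(i) ≥ n+1} − #{i ∈ {n+1,…,2n} : f(i) ≤ n}`. -/
noncomputable def shiftingIndex (n : ℕ) (f : ℤ → ℤ) : ℤ :=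
  (((Finset.Icc (1 : ℤ) n).filter fun i => (n : ℤ) + 1 ≤ f i).card : ℤ) -
  (((Finset.Icc ((n : ℤ) + 1) (2 * n)).filter fun i => f i ≤ (n : ℤ)).card : ℤ)

/-- an `n`-periodic bijection of bandwidth `w` has shifting index
of absolute value at most `w`. -/
theorem abs_shiftingIndex_le (n : ℕ) (hn : 1 ≤ n) (w : ℕ) (f : ℤ → ℤ)
    (hf : Function.Bijective f) (hper : ∀ i : ℤ, f (i + n) = f i + n)
    (hband : ∀ i : ℤ, |f i - i| ≤ (w : ℤ)) :
    |shiftingIndex n f| ≤ (w : ℤ) := by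
  have hA : ((Finset.Icc (1 : ℤ) n).filter fun i => (n : ℤ) + 1 ≤ f i).card ≤ w := by
    calc ((Finset.Icc (1 : ℤ) n).filter fun i => (n : ℤ) + 1 ≤ f i).card
        ≤ (Finset.Icc ((n : ℤ) + 1 - w) n).card := by
          apply Finset.card_le_card
          intro i hi
          simp only [Finset.mem_filter, Finset.mem_Icc] at *
          have := hband i
          rw [abs_le] at this
          omega
      _ ≤ w := by rw [Int.card_Icc]; omega
  have hB : ((Finset.Icc ((n : ℤ) + 1) (2 * n)).filter fun i => f i ≤ (n : ℤ)).card ≤ w := by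
    calc ((Finset.Icc ((n : ℤ) + 1) (2 * n)).filter fun i => f i ≤ (n : ℤ)).card
        ≤ (Finset.Icc ((n : ℤ) + 1) ((n : ℤ) + w)).card := by
          apply Finset.card_le_card
          intro i hi
          simp only [Finset.mem_filter, Finset.mem_Icc] at *
          have := hband i
          rw [abs_le] at this
          omega
      _ ≤ w := by rw [Int.card_Icc]; omega
  rw [abs_le]
  unfold shiftingIndex
  constructor <;> [skip; skip] <;>
    · have h1 := hA; have h2 := hB
      push_cast
      omega
end

section
/- Let n ≥ 3 and let π be a permutation of ℤ/nℤ of cyclic bandwidth 1, i.e., for every i the cyclic distance between π(i) and i is at most 1. Then π = S, or π = S⁻¹, or π is an involution (π ∘ π = id), where S is the cyclic shift S(i) = i + 1 (mod n). -/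
/-- The cyclic distance between residues `a, b : ZMod n`: the minimum of `|r|`
over integers `r ≡ a − b (mod n)`. -/
def cyclicDist (n : ℕ) (a b : ZMod n) : ℕ :=
  min (a - b).val (n - (a - b).val)

lemma tri (n : ℕ) (hn : 3 ≤ n) (a b : ZMod n) (h : cyclicDist n a b ≤ 1) :
    a = b ∨ a = b + 1 ∨ a = b - 1 := by
  haveI : NeZero n := ⟨by omega⟩
  unfold cyclicDist at h
  have hvlt : (a - b).val < n := ZMod.val_lt _
  have hx : (((a - b).val : ℕ) : ZMod n) = a - b := by
    rw [ZMod.natCast_val, ZMod.cast_id]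
  rcases min_le_iff.mp h with h' | h'
  · interval_cases hv : (a - b).val
    · left
      have : a - b = 0 := by rw [← hx]; simp
      linear_combination this
    · right; left
      have : a - b = 1 := by rw [← hx]; simp
      linear_combination this
  · right; right
    have hv : (a - b).val = n - 1 := by omega
    have : a - b = -1 := by
      rw [← hx, hv, Nat.cast_sub (by omega), ZMod.natCast_self]
      ring
    linear_combination this

lemma shift_lemma (n : ℕ) (hn : 3 ≤ n) (π : Equiv.Perm (ZMod n))
    (hπ : ∀ i : ZMod n, cyclicDist n (π i) i ≤ 1) (i : ZMod n)
    (h0 : π i = i + 1) (h1 : π (i + 1) ≠ i) :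
    π = Equiv.addRight (1 : ZMod n) := by
  haveI : NeZero n := ⟨by omega⟩
  have one_ne : (1 : ZMod n) ≠ 0 := by
    intro h
    have := ZMod.val_cast_of_lt (show (1:ℕ) < n by omega)
    rw [Nat.cast_one, h, ZMod.val_zero] at this
    omega
  have two_ne : (2 : ZMod n) ≠ 0 := by
    intro h
    have := ZMod.val_cast_of_lt (show (2:ℕ) < n by omega)
    rw [Nat.cast_two, h, ZMod.val_zero] at this
    omega
  have key : ∀ k : ℕ, π (i + (k : ZMod n)) = i + (k : ZMod n) + 1 ∧
      π (i + (k : ZMod n) + 1) = i + (k : ZMod n) + 2 := by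
    intro k
    induction k with
    | zero =>
      refine ⟨by simpa using h0, ?_⟩
      have e0 : π (i + (0:ℕ) + 1) = π (i + 1) := by norm_num
      rw [e0]
      rcases tri n hn (π (i + 1)) (i + 1) (hπ _) with h | h | h
      · exfalso
        have := π.injective (h.trans h0.symm)
        exact one_ne (by linear_combination this)
      · rw [h]; push_cast; ring
      · exfalso
        apply h1
        rw [h]; ring
    | succ k ih =>
      have ecast : (((k+1:ℕ)) : ZMod n) = (k : ZMod n) + 1 := by push_cast; ring
      rw [ecast]
      constructor
      · have : i + ((k:ZMod n) + 1) = i + (k:ZMod n) + 1 := by ring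
        rw [this, ih.2]; ring
      · have e2 : i + ((k:ZMod n) + 1) + 1 = i + (k:ZMod n) + 2 := by ring
        rw [e2]
        rcases tri n hn (π (i + (k:ZMod n) + 2)) (i + (k:ZMod n) + 2) (hπ _) with h | h | h
        · exfalso
          have h' : π (i + (k:ZMod n) + 1) = i + (k:ZMod n) + 2 := ih.2
          have := π.injective (h.trans h'.symm)
          exact one_ne (by linear_combination this)
        · rw [h]; ring
        · exfalso
          have h' : π (i + (k:ZMod n) + 2) = π (i + (k:ZMod n)) := by
            rw [h, ih.1]; ring
          have := π.injective h'
          exact two_ne (by linear_combination this)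
  ext j
  have hj : i + (((j - i).val : ℕ) : ZMod n) = j := by
    rw [ZMod.natCast_val, ZMod.cast_id]; ring
  have := (key (j - i).val).1
  rw [hj] at this
  simpa using this

lemma cyclicDist_comm (n : ℕ) [NeZero n] (a b : ZMod n) :
    cyclicDist n a b = cyclicDist n b a := by
  unfold cyclicDist
  by_cases h : a = b
  · subst h; rfl
  · have h1 : b - a = -(a - b) := by ring
    have h2 : a - b ≠ 0 := sub_ne_zero.mpr h
    have h3 : (-(a - b)).val = n - (a - b).val := by
      rw [ZMod.neg_val]; simp [h2]
    have h4 : (a - b).val < n := ZMod.val_lt _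
    rw [h1, h3]
    omega

/-- for `n ≥ 3`, a permutation of `ℤ/nℤ` of cyclic bandwidth 1 is
the shift `S`, or `S⁻¹`, or an involution. -/
theorem cyclic_bandwidth_one_trichotomy (n : ℕ) (hn : 3 ≤ n)
    (π : Equiv.Perm (ZMod n)) (hπ : ∀ i : ZMod n, cyclicDist n (π i) i ≤ 1) :
    π = Equiv.addRight (1 : ZMod n) ∨ π = (Equiv.addRight (1 : ZMod n))⁻¹ ∨
      π * π = 1 := by
  haveI : NeZero n := ⟨by omega⟩
  by_cases hinv : π * π = 1
  · exact Or.inr (Or.inr hinv)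
  have hne : ¬ ∀ i, π (π i) = i := by
    intro h
    apply hinv
    ext i
    simpa [Equiv.Perm.mul_apply] using h i
  push_neg at hne
  obtain ⟨i, hi⟩ := hne
  rcases tri n hn (π i) i (hπ i) with h | h | h
  · exact absurd (by rw [h, h]) hi
  · left
    refine shift_lemma n hn π hπ i h ?_
    rw [← h]; exact hi
  · right; left
    have hπ' : ∀ j : ZMod n, cyclicDist n (π⁻¹ j) j ≤ 1 := by
      intro j
      have := hπ (π⁻¹ j)
      rw [← Equiv.Perm.mul_apply, mul_inv_cancel, Equiv.Perm.one_apply] at this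
      rw [cyclicDist_comm]
      exact this
    have h0' : π⁻¹ (i - 1) = (i - 1) + 1 := by
      have hpi : π⁻¹ (π i) = i := by rw [← Equiv.Perm.mul_apply, inv_mul_cancel, Equiv.Perm.one_apply]
      rw [h] at hpi
      rw [hpi]; ring
    have h1' : π⁻¹ ((i - 1) + 1) ≠ i - 1 := by
      rw [show (i - 1) + 1 = i by ring]
      intro hc
      apply hi
      rw [h, ← hc, ← Equiv.Perm.mul_apply, mul_inv_cancel, Equiv.Perm.one_apply]
    have := shift_lemma n hn π⁻¹ hπ' (i - 1) h0' h1'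
    rw [← this, inv_inv]
end
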